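/- arXiv:0712.1867 — 6 statements merged into one kernel-verified Lean document; each statement's English description precedes it below -/
import Mathlib

section
/- Let U, V, {v'} be disjoint subsets of R^d with U ∪ V ∪ {v'} discrete, non-equidistant, and with no descending chains. Let m be the unique stable bipartite partial matching between U and V, and m' the unique stable bipartite partial matching between U and V ∪ {v'}. Then for every u ∈ U, |u − m'(u)| ≤ |u − m(u)| (with the convention |x − m(x)| = ∞ when x is unmatched). -/
open scoped ENNReal

/-- Distance from `x` to its partner under a partial matching `m`; `∞` if unmatched. -/
noncomputable def partnerEDist {E : Type*} [PseudoEMetricSpace E]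
    (m : E → Option E) (x : E) : ℝ≥0∞ :=
  match m x with
  | some y => edist x y
  | none => ⊤

/-- `m` is a partial matching of the set `U`. -/
def IsPartialMatching {E : Type*} (U : Set E) (m : E → Option E) : Prop :=
  (∀ x, x ∉ U → m x = none) ∧
  ∀ x ∈ U, ∀ y, m x = some y → y ∈ U ∧ y ≠ x ∧ m y = some x

/-- `m` is a stable matching of `U`. -/
def IsStableMatching {E : Type*} [PseudoEMetricSpace E] (U : Set E) (m : E → Option E) : Prop :=
  ∀ x ∈ U, ∀ y ∈ U, x ≠ y →
    ¬ (edist x y < min (partnerEDist m x) (partnerEDist m y))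

/-- `U` is discrete (locally finite). -/
def DiscreteSet {E : Type*} [PseudoMetricSpace E] (U : Set E) : Prop :=
  ∀ (p : E) (r : ℝ), (U ∩ Metric.ball p r).Finite

/-- `U` is non-equidistant: no two distinct unordered pairs realize the same
positive distance. -/
def NonEquidistant {E : Type*} [PseudoMetricSpace E] (U : Set E) : Prop :=
  ¬ ∃ w ∈ U, ∃ x ∈ U, ∃ y ∈ U, ∃ z ∈ U,
      ({w, x} : Set E) ≠ {y, z} ∧ dist w x = dist y z ∧ 0 < dist w x

/-- `U` has no descending chains. -/
def NoDescendingChain {E : Type*} [PseudoMetricSpace E] (U : Set E) : Prop :=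
  ¬ ∃ x : ℕ → E, (∀ n, x n ∈ U) ∧ StrictAnti (fun n => dist (x n) (x (n + 1)))

/-- `m` is a bipartite partial matching between `U` and `V`. -/
def IsBipartiteMatching {E : Type*} (U V : Set E) (m : E → Option E) : Prop :=
  (∀ x, x ∉ U ∪ V → m x = none) ∧
  (∀ x ∈ U, ∀ y, m x = some y → y ∈ V ∧ m y = some x) ∧
  (∀ x ∈ V, ∀ y, m x = some y → y ∈ U ∧ m y = some x)

/-- A bipartite matching between `U` and `V` is stable if no `x ∈ U`, `y ∈ V`
both prefer each other to their current partners. -/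
def IsBipartiteStable {E : Type*} [PseudoEMetricSpace E] (U V : Set E) (m : E → Option E) : Prop :=
  ∀ x ∈ U, ∀ y ∈ V, ¬ (edist x y < min (partnerEDist m x) (partnerEDist m y))

lemma dist_lt_of_edist_lt' {E : Type*} [PseudoMetricSpace E] {a b c d : E}
    (h : edist a b < edist c d) : dist a b < dist c d := by
  rw [edist_dist, edist_dist] at h
  exact (ENNReal.ofReal_lt_ofReal_iff_of_nonneg dist_nonneg).mp h

lemma dist_eq_of_edist_eq' {E : Type*} [PseudoMetricSpace E] {a b c d : E}
    (h : edist a b = edist c d) : dist a b = dist c d := by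
  rw [edist_dist, edist_dist] at h
  exact (ENNReal.ofReal_eq_ofReal_iff dist_nonneg dist_nonneg).mp h

lemma no_chain_pairs {E : Type*} [PseudoMetricSpace E] {S : Set E}
    (h3 : NoDescendingChain S) (f : ℕ → E × E)
    (hmem : ∀ n, (f n).1 ∈ S ∧ (f n).2 ∈ S)
    (hd : ∀ n, dist (f n).2 (f (n+1)).1 < dist (f n).1 (f n).2 ∧
               dist (f (n+1)).1 (f (n+1)).2 < dist (f n).2 (f (n+1)).1) : False := by
  apply h3
  refine ⟨fun n => if n % 2 = 0 then (f (n/2)).1 else (f (n/2)).2, fun n => ?_, ?_⟩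
  · dsimp only
    split
    · exact (hmem _).1
    · exact (hmem _).2
  · apply strictAnti_nat_of_succ_lt
    intro n
    dsimp only
    rcases Nat.even_or_odd n with ⟨k, hk⟩ | ⟨k, hk⟩
    · subst hk
      have e0 : (k + k) % 2 = 0 := by omega
      have e1 : (k + k + 1) % 2 = 1 := by omega
      have e2 : (k + k + 1 + 1) % 2 = 0 := by omega
      have d0 : (k + k) / 2 = k := by omega
      have d1 : (k + k + 1) / 2 = k := by omega
      have d2 : (k + k + 1 + 1) / 2 = k + 1 := by omega
      simp only [e0, e1, e2, d0, d1, d2]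
      norm_num
      exact (hd k).1
    · subst hk
      have e0 : (2 * k + 1) % 2 = 1 := by omega
      have e1 : (2 * k + 1 + 1) % 2 = 0 := by omega
      have e2 : (2 * k + 1 + 1 + 1) % 2 = 1 := by omega
      have d0 : (2 * k + 1) / 2 = k := by omega
      have d1 : (2 * k + 1 + 1) / 2 = k + 1 := by omega
      have d2 : (2 * k + 1 + 1 + 1) / 2 = k + 1 := by omega
      simp only [e0, e1, e2, d0, d1, d2]
      norm_num
      exact (hd k).2

/-- The key step: from an `m`-edge (u,v) that `u` strictly prefers to its `m'`-partner,
produce a strictly shorter `m`-edge with the same property. -/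
lemma key_step {E : Type*} [MetricSpace E]
    {U V : Set E} {v' : E} (hUV : Disjoint U V)
    (h2 : NonEquidistant (U ∪ V ∪ {v'}))
    {m m' : E → Option E}
    (hm : IsBipartiteMatching U V m) (hms : IsBipartiteStable U V m)
    (hm' : IsBipartiteMatching U (V ∪ {v'}) m') (hms' : IsBipartiteStable U (V ∪ {v'}) m')
    (u v : E) (hu : u ∈ U) (hv : v ∈ V) (hmu : m u = some v)
    (hlt : edist u v < partnerEDist m' u) :
    ∃ u1 v1 : E, (u1 ∈ U ∧ v1 ∈ V ∧ m u1 = some v1 ∧ edist u1 v1 < partnerEDist m' u1) ∧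
      edist v u1 < edist u v ∧ edist u1 v1 < edist v u1 := by
  have memS : ∀ x : E, x ∈ U ∨ x ∈ V → x ∈ U ∪ V ∪ {v'} := by
    rintro x (hx | hx)
    · exact Or.inl (Or.inl hx)
    · exact Or.inl (Or.inr hx)
  have huv : u ≠ v := fun h => Set.disjoint_left.mp hUV hu (h ▸ hv)
  -- step 1: stability of m' at (u, v)
  have hst1 := hms' u hu v (Or.inl hv)
  have h1v : partnerEDist m' v ≤ edist u v := by
    by_contra h
    exact hst1 (lt_min hlt (not_le.mp h))
  obtain ⟨u1, hm'v⟩ : ∃ u1, m' v = some u1 := by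
    cases h : m' v with
    | none =>
      exfalso
      rw [partnerEDist, h] at h1v
      simp only [top_le_iff] at h1v
      rw [h1v] at hlt
      exact not_top_lt hlt
    | some u1 => exact ⟨u1, rfl⟩
  obtain ⟨hu1U, hm'u1⟩ := hm'.2.2 v (Or.inl hv) u1 hm'v
  have hpm'v : partnerEDist m' v = edist v u1 := by rw [partnerEDist, hm'v]
  have hu1u : u1 ≠ u := by
    intro h
    subst h
    rw [partnerEDist, hm'u1] at hlt
    exact lt_irrefl _ hlt
  have hvu1 : v ≠ u1 := fun h => Set.disjoint_left.mp hUV hu1U (h ▸ hv)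
  have h1lt : edist v u1 < edist u v := by
    rcases lt_or_eq_of_le (hpm'v ▸ h1v) with h | h
    · exact h
    · exfalso
      apply h2
      refine ⟨v, memS v (Or.inr hv), u1, memS u1 (Or.inl hu1U), u,
        memS u (Or.inl hu), v, memS v (Or.inr hv), ?_, dist_eq_of_edist_eq' h, ?_⟩
      · intro hset
        have hmem : u ∈ ({v, u1} : Set E) := by rw [hset]; exact Or.inl rfl
        rcases hmem with h' | h'
        · exact huv h'
        · exact hu1u h'.symm
      · exact dist_pos.mpr hvu1
  -- step 2: stability of m at (u1, v)
  have hmv : m v = some u := (hm.2.1 u hu v hmu).2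
  have hpmv : partnerEDist m v = edist v u := by rw [partnerEDist, hmv]
  have hst2 := hms u1 hu1U v hv
  have h2v : partnerEDist m u1 ≤ edist u1 v := by
    by_contra h
    apply hst2
    refine lt_min (not_le.mp h) ?_
    rw [hpmv, edist_comm u1 v, edist_comm v u]
    exact h1lt
  obtain ⟨v1, hmu1⟩ : ∃ v1, m u1 = some v1 := by
    cases h : m u1 with
    | none =>
      exfalso
      rw [partnerEDist, h] at h2v
      simp only [top_le_iff] at h2v
      exact (edist_lt_top u1 v).ne h2v
    | some v1 => exact ⟨v1, rfl⟩
  obtain ⟨hv1V, hmv1⟩ := hm.2.1 u1 hu1U v1 hmu1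
  have hv1v : v1 ≠ v := by
    intro h
    subst h
    rw [hmv] at hmv1
    exact hu1u (Option.some.inj hmv1.symm)
  have hu1v1 : u1 ≠ v1 := fun h => Set.disjoint_left.mp hUV hu1U (h ▸ hv1V)
  have hpmu1 : partnerEDist m u1 = edist u1 v1 := by rw [partnerEDist, hmu1]
  have h2lt : edist u1 v1 < edist u1 v := by
    rcases lt_or_eq_of_le (hpmu1 ▸ h2v) with h | h
    · exact h
    · exfalso
      apply h2
      refine ⟨u1, memS u1 (Or.inl hu1U), v1, memS v1 (Or.inr hv1V), u1,
        memS u1 (Or.inl hu1U), v, memS v (Or.inr hv), ?_, dist_eq_of_edist_eq' h, ?_⟩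
      · intro hset
        have hmem : v ∈ ({u1, v1} : Set E) := by rw [hset]; exact Or.inr rfl
        rcases hmem with h' | h'
        · exact hvu1 h'
        · exact hv1v h'.symm
      · exact dist_pos.mpr hu1v1
  have hpm'u1 : partnerEDist m' u1 = edist u1 v := by rw [partnerEDist, hm'u1]
  refine ⟨u1, v1, ⟨hu1U, hv1V, hmu1, ?_⟩, h1lt, ?_⟩
  · rw [hpm'u1]; exact h2lt
  · rw [edist_comm v u1]; exact h2lt

theorem stable_bipartite_monotone' {E : Type*} [MetricSpace E]
    (U V : Set E) (v' : E)
    (hUV : Disjoint U V)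
    (h2 : NonEquidistant (U ∪ V ∪ {v'}))
    (h3 : NoDescendingChain (U ∪ V ∪ {v'}))
    (m m' : E → Option E)
    (hm : IsBipartiteMatching U V m) (hms : IsBipartiteStable U V m)
    (hm' : IsBipartiteMatching U (V ∪ {v'}) m') (hms' : IsBipartiteStable U (V ∪ {v'}) m') :
    ∀ u ∈ U, partnerEDist m' u ≤ partnerEDist m u := by
  classical
  have memS : ∀ x : E, x ∈ U ∨ x ∈ V → x ∈ U ∪ V ∪ {v'} := by
    rintro x (hx | hx)
    · exact Or.inl (Or.inl hx)
    · exact Or.inl (Or.inr hx)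
  intro u hu
  by_contra h
  have hlt : partnerEDist m u < partnerEDist m' u := not_le.mp h
  obtain ⟨v, hmu⟩ : ∃ v, m u = some v := by
    cases hmu : m u with
    | none =>
      exfalso
      rw [partnerEDist, hmu] at hlt
      exact not_top_lt hlt
    | some v => exact ⟨v, rfl⟩
  have hv : v ∈ V := (hm.2.1 u hu v hmu).1
  have hlt' : edist u v < partnerEDist m' u := by
    rw [partnerEDist, hmu] at hlt
    exact hlt
  -- build the descending sequence of pairs
  have key : ∀ p : E × E,
      (p.1 ∈ U ∧ p.2 ∈ V ∧ m p.1 = some p.2 ∧ edist p.1 p.2 < partnerEDist m' p.1) →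
      ∃ q : E × E,
        (q.1 ∈ U ∧ q.2 ∈ V ∧ m q.1 = some q.2 ∧ edist q.1 q.2 < partnerEDist m' q.1) ∧
        edist p.2 q.1 < edist p.1 p.2 ∧ edist q.1 q.2 < edist p.2 q.1 := by
    intro p hp
    obtain ⟨u1, v1, hq, hd1, hd2⟩ :=
      key_step hUV h2 hm hms hm' hms' p.1 p.2 hp.1 hp.2.1 hp.2.2.1 hp.2.2.2
    exact ⟨(u1, v1), hq, hd1, hd2⟩
  let T := {p : E × E //
    p.1 ∈ U ∧ p.2 ∈ V ∧ m p.1 = some p.2 ∧ edist p.1 p.2 < partnerEDist m' p.1}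
  let F : T → T := fun s => ⟨(key s.1 s.2).choose, (key s.1 s.2).choose_spec.1⟩
  have hF : ∀ s : T,
      edist s.1.2 (F s).1.1 < edist s.1.1 s.1.2 ∧
      edist (F s).1.1 (F s).1.2 < edist s.1.2 (F s).1.1 :=
    fun s => (key s.1 s.2).choose_spec.2
  let g : ℕ → T := fun n => F^[n] ⟨(u, v), hu, hv, hmu, hlt'⟩
  have hg : ∀ n, g (n + 1) = F (g n) := fun n => Function.iterate_succ_apply' F n _
  apply no_chain_pairs h3 (fun n => (g n).1)
  · intro n
    exact ⟨memS _ (Or.inl (g n).2.1), memS _ (Or.inr (g n).2.2.1)⟩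
  · intro n
    have hh := hF (g n)
    rw [← hg n] at hh
    exact ⟨dist_lt_of_edist_lt' hh.1, dist_lt_of_edist_lt' hh.2⟩

/-- Monotonicity for two-color stable matching: adding an extra blue point `v'` makes
the matching no worse for every red point. -/
theorem stable_bipartite_monotone (d : ℕ)
    (U V : Set (EuclideanSpace ℝ (Fin d))) (v' : EuclideanSpace ℝ (Fin d))
    (hUV : Disjoint U V) (hUv : v' ∉ U) (hVv : v' ∉ V)
    (h1 : DiscreteSet (U ∪ V ∪ {v'})) (h2 : NonEquidistant (U ∪ V ∪ {v'}))
    (h3 : NoDescendingChain (U ∪ V ∪ {v'}))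
    (m m' : EuclideanSpace ℝ (Fin d) → Option (EuclideanSpace ℝ (Fin d)))
    (hm : IsBipartiteMatching U V m) (hms : IsBipartiteStable U V m)
    (hm' : IsBipartiteMatching U (V ∪ {v'}) m') (hms' : IsBipartiteStable U (V ∪ {v'}) m') :
    ∀ u ∈ U, partnerEDist m' u ≤ partnerEDist m u :=
  stable_bipartite_monotone' U V v' hUV h2 h3 m m' hm hms hm' hms'
end

section
/- Let U ⊂ R^d (respectively, disjoint U, V ⊂ R^d with U ∪ V) be discrete, non-equidistant, and with no descending chains. Then there is a unique stable partial matching of U (respectively, a unique stable bipartite partial matching between U and V). Moreover, in the one-color case at most one point is unmatched, and in the two-color case all unmatched points lie in the same set (U or V). -/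
open scoped ENNReal

lemma partnerEDist_some {E : Type*} [PseudoEMetricSpace E] {m : E → Option E} {x y : E}
    (h : m x = some y) : partnerEDist m x = edist x y := by
  simp [partnerEDist, h]

lemma partnerEDist_none {E : Type*} [PseudoEMetricSpace E] {m : E → Option E} {x : E}
    (h : m x = none) : partnerEDist m x = ⊤ := by
  simp [partnerEDist, h]

namespace StableAux

open Metric Classical

variable {E : Type*} [MetricSpace E]

/-- `x`, `y` are a mutually nearest compatible pair within `T`. -/
def Mut (r : E → E → Prop) (T : Set E) (x y : E) : Prop :=
  x ∈ T ∧ y ∈ T ∧ r x y ∧ (∀ z ∈ T, r x z → dist x y ≤ dist x z) ∧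
    (∀ z ∈ T, r y z → dist x y ≤ dist y z)

/-- Iterated removal of mutually nearest pairs. -/
def stage (r : E → E → Prop) (S : Set E) : ℕ → Set E
  | 0 => S
  | n + 1 => {x | x ∈ stage r S n ∧ ¬ ∃ y, Mut r (stage r S n) x y}

def Tinf (r : E → E → Prop) (S : Set E) : Set E := ⋂ n, stage r S n

/-- The constructed matching. -/
noncomputable def matchFn (r : E → E → Prop) (S : Set E) : E → Option E :=
  fun x => if h : ∃ y, ∃ n, Mut r (stage r S n) x y then some h.choose else none

structure Setup (r : E → E → Prop) (S : Set E) : Prop where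
  symm : ∀ x y, r x y → r y x
  mem : ∀ x y, r x y → x ∈ S ∧ y ∈ S
  ne : ∀ x y, r x y → x ≠ y
  disc : DiscreteSet S
  neq : NonEquidistant S
  ndc : NoDescendingChain S

variable {r : E → E → Prop} {S T : Set E}

lemma pair_eq (h : Setup r S) {w x y z : E} (hw : w ∈ S) (hx : x ∈ S) (hy : y ∈ S)
    (hz : z ∈ S) (hd : dist w x = dist y z) (hpos : 0 < dist w x) :
    w = y ∧ x = z ∨ w = z ∧ x = y := by
  by_contra hc
  exact h.neq ⟨w, hw, x, hx, y, hy, z, hz,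
    fun hp => hc (Set.pair_eq_pair_iff.1 hp), hd, hpos⟩

lemma mut_symm (h : Setup r S) {x y : E} (hm : Mut r T x y) : Mut r T y x := by
  obtain ⟨hx, hy, hr, h1, h2⟩ := hm
  refine ⟨hy, hx, h.symm _ _ hr, ?_, ?_⟩
  · intro z hz hrz; rw [dist_comm]; exact h2 z hz hrz
  · intro z hz hrz; rw [dist_comm]; exact h1 z hz hrz

lemma mut_unique (h : Setup r S) (hT : T ⊆ S) {x y y' : E}
    (h1 : Mut r T x y) (h2 : Mut r T x y') : y = y' := by
  have hle1 : dist x y ≤ dist x y' := h1.2.2.2.1 y' h2.2.1 h2.2.2.1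
  have hle2 : dist x y' ≤ dist x y := h2.2.2.2.1 y h1.2.1 h1.2.2.1
  have heq : dist x y = dist x y' := le_antisymm hle1 hle2
  have hpos : 0 < dist x y := dist_pos.2 (h.ne _ _ h1.2.2.1)
  rcases pair_eq h (hT h1.1) (hT h1.2.1) (hT h2.1) (hT h2.2.1) heq hpos with ⟨_, hyy⟩ | ⟨hxy, _⟩
  · exact hyy
  · exact absurd hxy.symm (h.ne _ _ h2.2.2.1).symm

lemma stage_subset : ∀ n, stage r S n ⊆ S
  | 0 => subset_rfl
  | n + 1 => fun x hx => stage_subset n hx.1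

lemma stage_antitone : Antitone (stage r S) :=
  antitone_nat_of_succ_le fun _ _ hx => hx.1

lemma notMem_stage_succ {n : ℕ} {x y : E} (hm : Mut r (stage r S n) x y) :
    x ∉ stage r S (n + 1) := fun hx => hx.2 ⟨y, hm⟩

lemma mem_stage_of {z : E} (hz : z ∈ S) :
    ∀ n, (∀ k < n, ∀ w, ¬ Mut r (stage r S k) z w) → z ∈ stage r S n
  | 0, _ => hz
  | n + 1, h =>
    ⟨mem_stage_of hz n (fun k hk w hw => h k (hk.trans n.lt_succ_self) w hw),
      fun ⟨w, hw⟩ => h n n.lt_succ_self w hw⟩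

lemma exists_nearest (h : Setup r S) (hT : T ⊆ S) (x : E) (hx : ∃ y ∈ T, r x y) :
    ∃ y, y ∈ T ∧ r x y ∧ ∀ z ∈ T, r x z → dist x y ≤ dist x z := by
  obtain ⟨y0, hy0T, hy0r⟩ := hx
  set F := {z | z ∈ T ∧ r x z ∧ dist x z ≤ dist x y0} with hFdef
  have hFfin : F.Finite := by
    refine (h.disc x (dist x y0 + 1)).subset fun z hz => ⟨hT hz.1, ?_⟩
    rw [Metric.mem_ball, dist_comm]
    linarith [hz.2.2]
  have hFne : F.Nonempty := ⟨y0, hy0T, hy0r, le_rfl⟩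
  obtain ⟨y, hyF, hymin⟩ := Set.exists_min_image F (fun z => dist x z) hFfin hFne
  refine ⟨y, hyF.1, hyF.2.1, fun z hzT hzr => ?_⟩
  by_cases hc : dist x z ≤ dist x y0
  · exact hymin z ⟨hzT, hzr, hc⟩
  · exact hyF.2.2.trans (le_of_not_ge hc)

lemma exists_mut (h : Setup r S) (hT : T ⊆ S)
    (hpair : ∃ x ∈ T, ∃ y ∈ T, r x y) : ∃ x y, Mut r T x y := by
  by_contra hno
  push_neg at hno
  obtain ⟨x0, hx0, y0, hy0, hr0⟩ := hpair
  have key : ∀ a : {x : E // x ∈ T ∧ ∃ y ∈ T, r x y},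
      ∃ b : {x : E // x ∈ T ∧ ∃ y ∈ T, r x y},
        r a.1 b.1 ∧ ∀ z ∈ T, r a.1 z → dist a.1 b.1 ≤ dist a.1 z := by
    intro a
    obtain ⟨y, hyT, hyr, hmin⟩ := exists_nearest h hT a.1 a.2.2
    exact ⟨⟨y, hyT, ⟨a.1, a.2.1, h.symm _ _ hyr⟩⟩, hyr, hmin⟩
  choose nxt hnxt1 hnxt2 using key
  set seq : ℕ → {x : E // x ∈ T ∧ ∃ y ∈ T, r x y} :=
    fun n => nxt^[n] ⟨x0, hx0, y0, hy0, hr0⟩ with hseqdef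
  have hseq : ∀ n, seq (n + 1) = nxt (seq n) := fun n =>
    Function.iterate_succ_apply' nxt n _
  have hdec : ∀ n, dist (seq (n + 1)).1 (seq (n + 2)).1 < dist (seq n).1 (seq (n + 1)).1 := by
    intro n
    have hb := hseq n
    have hc := hseq (n + 1)
    have hrab : r (seq n).1 (seq (n + 1)).1 := by rw [hb]; exact hnxt1 (seq n)
    have hminb : ∀ z ∈ T, r (seq n).1 z → dist (seq n).1 (seq (n + 1)).1 ≤ dist (seq n).1 z := by
      rw [hb]; exact hnxt2 (seq n)
    have hrbc : r (seq (n + 1)).1 (seq (n + 2)).1 := by rw [hc]; exact hnxt1 (seq (n + 1))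
    have hminc : ∀ z ∈ T, r (seq (n + 1)).1 z →
        dist (seq (n + 1)).1 (seq (n + 2)).1 ≤ dist (seq (n + 1)).1 z := by
      rw [hc]; exact hnxt2 (seq (n + 1))
    have hle : dist (seq (n + 1)).1 (seq (n + 2)).1 ≤ dist (seq n).1 (seq (n + 1)).1 := by
      have := hminc (seq n).1 (seq n).2.1 (h.symm _ _ hrab)
      rwa [dist_comm (seq (n + 1)).1 (seq n).1] at this
    rcases hle.lt_or_eq with hlt | heq
    · exact hlt
    · exfalso
      have hpos : 0 < dist (seq (n + 1)).1 (seq (n + 2)).1 :=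
        dist_pos.2 (h.ne _ _ hrbc)
      rcases pair_eq h (hT (seq (n + 1)).2.1) (hT (seq (n + 2)).2.1) (hT (seq n).2.1)
          (hT (seq (n + 1)).2.1) heq hpos with ⟨hba, _⟩ | ⟨_, hca⟩
      · exact (h.ne _ _ hrab) hba.symm
      · refine hno (seq n).1 (seq (n + 1)).1
          ⟨(seq n).2.1, (seq (n + 1)).2.1, hrab, hminb, ?_⟩
        intro z hz hrz
        have := hminc z hz hrz
        rw [hca, dist_comm] at this
        exact this
  exact h.ndc ⟨fun n => (seq n).1, fun n => hT (seq n).2.1, strictAnti_nat_of_succ_lt hdec⟩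


lemma mut_stage_unique (h : Setup r S) {x y y' : E}
    (h1 : ∃ n, Mut r (stage r S n) x y) (h2 : ∃ n, Mut r (stage r S n) x y') : y = y' := by
  obtain ⟨n, hn⟩ := h1
  obtain ⟨n', hn'⟩ := h2
  rcases lt_trichotomy n n' with hlt | rfl | hlt
  · exact absurd (stage_antitone (Nat.succ_le_of_lt hlt) hn'.1) (notMem_stage_succ hn)
  · exact mut_unique h (stage_subset n) hn hn'
  · exact absurd (stage_antitone (Nat.succ_le_of_lt hlt) hn.1) (notMem_stage_succ hn')

lemma matchFn_eq_some (h : Setup r S) {x y : E} (hxy : ∃ n, Mut r (stage r S n) x y) :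
    matchFn r S x = some y := by
  have hex : ∃ y, ∃ n, Mut r (stage r S n) x y := ⟨y, hxy⟩
  rw [matchFn, dif_pos hex]
  exact congrArg some (mut_stage_unique h hex.choose_spec hxy)

lemma matchFn_some (h : Setup r S) {x y : E} (hx : matchFn r S x = some y) :
    ∃ n, Mut r (stage r S n) x y := by
  by_cases hex : ∃ y, ∃ n, Mut r (stage r S n) x y
  · rw [matchFn, dif_pos hex] at hx
    exact Option.some.inj hx ▸ hex.choose_spec
  · rw [matchFn, dif_neg hex] at hx
    cases hx

lemma matchFn_spec (h : Setup r S) {x y : E} (hx : matchFn r S x = some y) :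
    r x y ∧ matchFn r S y = some x := by
  obtain ⟨n, hn⟩ := matchFn_some h hx
  exact ⟨hn.2.2.1, matchFn_eq_some h ⟨n, mut_symm h hn⟩⟩

lemma mut_not_of_none (h : Setup r S) {x : E} (hx : matchFn r S x = none) :
    ∀ n y, ¬ Mut r (stage r S n) x y := by
  intro n y hmut
  rw [matchFn_eq_some h ⟨n, hmut⟩] at hx
  cases hx

lemma mem_Tinf_of (h : Setup r S) {x : E} (hx : x ∈ S)
    (hno : ∀ n y, ¬ Mut r (stage r S n) x y) : x ∈ Tinf r S :=
  Set.mem_iInter.2 fun n => mem_stage_of hx n fun k _ w hw => hno k w hw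

lemma no_pair_inf (h : Setup r S) :
    ¬ ∃ x y, x ∈ Tinf r S ∧ y ∈ Tinf r S ∧ r x y := by
  rintro ⟨x0, y0, hx0, hy0, hr0⟩
  have hTsub : Tinf r S ⊆ S := (Set.iInter_subset _ 0).trans subset_rfl
  obtain ⟨x, y, hxy⟩ := exists_mut h hTsub ⟨x0, hx0, y0, hy0, hr0⟩
  set R := dist x y + 1 with hRdef
  set F := S ∩ (Metric.ball x R ∪ Metric.ball y R) with hFdef
  have hF : F.Finite := by
    rw [hFdef, Set.inter_union_distrib_left]
    exact (h.disc x R).union (h.disc y R)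
  set g : E → ℕ := fun z => if hz : ∃ k, z ∉ stage r S k then Nat.find hz else 0 with hgdef
  obtain ⟨N, hN⟩ : ∃ N, ∀ z ∈ F, g z ≤ N := by
    obtain ⟨N, hN⟩ := (hF.image g).bddAbove
    exact ⟨N, fun z hz => hN (Set.mem_image_of_mem g hz)⟩
  have hcap : ∀ z ∈ F, z ∈ stage r S N → z ∈ Tinf r S := by
    intro z hzF hzN
    by_contra hzT
    have hz' : ∃ k, z ∉ stage r S k := by
      by_contra hc
      push_neg at hc
      exact hzT (Set.mem_iInter.2 hc)
    have hfind := Nat.find_spec hz'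
    have hle : g z ≤ N := hN z hzF
    rw [hgdef] at hle
    simp only [dif_pos hz'] at hle
    exact hfind (stage_antitone hle hzN)
  have hmutN : Mut r (stage r S N) x y := by
    have hxN : x ∈ stage r S N := Set.mem_iInter.1 hxy.1 N
    have hyN : y ∈ stage r S N := Set.mem_iInter.1 hxy.2.1 N
    refine ⟨hxN, hyN, hxy.2.2.1, ?_, ?_⟩
    · intro z hzN hrz
      by_cases hc : dist x y ≤ dist x z
      · exact hc
      push_neg at hc
      have hzF : z ∈ F := ⟨(h.mem _ _ hrz).2,
        Or.inl (Metric.mem_ball.2 (by rw [dist_comm]; rw [hRdef]; linarith))⟩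
      exact hxy.2.2.2.1 z (hcap z hzF hzN) hrz
    · intro z hzN hrz
      by_cases hc : dist x y ≤ dist y z
      · exact hc
      push_neg at hc
      have hzF : z ∈ F := ⟨(h.mem _ _ hrz).2,
        Or.inr (Metric.mem_ball.2 (by rw [dist_comm]; rw [hRdef]; linarith))⟩
      exact hxy.2.2.2.2 z (hcap z hzF hzN) hrz
  exact notMem_stage_succ hmutN (Set.mem_iInter.1 hxy.1 (N + 1))

lemma stable_abs (h : Setup r S) :
    ∀ x y, r x y →
      ¬ (edist x y < min (partnerEDist (matchFn r S) x) (partnerEDist (matchFn r S) y)) := by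
  have key : ∀ x y, r x y → (∃ n z, Mut r (stage r S n) x z ∧ y ∈ stage r S n) →
      partnerEDist (matchFn r S) x ≤ edist x y := by
    rintro x y hr ⟨n, z, hmut, hyn⟩
    rw [partnerEDist_some (matchFn_eq_some h ⟨n, hmut⟩), edist_dist, edist_dist]
    exact ENNReal.ofReal_le_ofReal (hmut.2.2.2.1 y hyn hr)
  intro x y hr hlt
  by_cases hx : ∃ n z, Mut r (stage r S n) x z
  · obtain ⟨n, z, hnz⟩ := hx
    by_cases hy : ∃ n' z', Mut r (stage r S n') y z'
    · obtain ⟨n', z', hn'⟩ := hy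
      rcases le_total n n' with hle | hle
      · exact absurd hlt (not_lt.2 ((min_le_left _ _).trans
          (key x y hr ⟨n, z, hnz, stage_antitone hle hn'.1⟩)))
      · have := key y x (h.symm _ _ hr) ⟨n', z', hn', stage_antitone hle hnz.1⟩
        rw [edist_comm] at this
        exact absurd hlt (not_lt.2 ((min_le_right _ _).trans this))
    · push_neg at hy
      have hyn : y ∈ stage r S n := mem_stage_of (h.mem _ _ hr).2 n fun k _ w hw => hy k w hw
      exact absurd hlt (not_lt.2 ((min_le_left _ _).trans (key x y hr ⟨n, z, hnz, hyn⟩)))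
  · by_cases hy : ∃ n z, Mut r (stage r S n) y z
    · obtain ⟨n, z, hnz⟩ := hy
      push_neg at hx
      have hxn : x ∈ stage r S n := mem_stage_of (h.mem _ _ hr).1 n fun k _ w hw => hx k w hw
      have := key y x (h.symm _ _ hr) ⟨n, z, hnz, hxn⟩
      rw [edist_comm] at this
      exact absurd hlt (not_lt.2 ((min_le_right _ _).trans this))
    · push_neg at hx hy
      exact no_pair_inf h ⟨x, y, mem_Tinf_of h (h.mem _ _ hr).1 hx,
        mem_Tinf_of h (h.mem _ _ hr).2 hy, hr⟩

lemma unique_aux (h : Setup r S) (m' : E → Option E)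
    (hm' : ∀ x y, m' x = some y → r x y ∧ m' y = some x)
    (hs' : ∀ x y, r x y → ¬ (edist x y < min (partnerEDist m' x) (partnerEDist m' y))) :
    ∀ n x y, Mut r (stage r S n) x y → m' x = some y := by
  intro n
  induction n using Nat.strong_induction_on with
  | _ n ih =>
    intro x y hmut
    by_contra hxne
    have hyne : m' y ≠ some x := fun hyx => hxne (hm' y x hyx).2
    have hgt : ∀ a b, Mut r (stage r S n) a b → m' a ≠ some b →
        edist a b < partnerEDist m' a := by
      intro a b hab hne'
      cases hma : m' a with
      | none => rw [partnerEDist_none hma]; exact edist_lt_top a b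
      | some c =>
        obtain ⟨hrac, hca⟩ := hm' a c hma
        have hcb : c ≠ b := fun hcb => hne' (hcb ▸ hma)
        have hcn : c ∈ stage r S n := by
          refine mem_stage_of (h.mem _ _ hrac).2 n ?_
          intro k hk w hw
          have hcw := ih k hk c w hw
          have hwa : w = a := Option.some.inj (hcw.symm.trans hca)
          subst hwa
          exact notMem_stage_succ (mut_symm h hw)
            (stage_antitone (Nat.succ_le_of_lt hk) hab.1)
        have hdle : dist a b ≤ dist a c := hab.2.2.2.1 c hcn hrac
        have hdne : dist a b ≠ dist a c := by
          intro hEq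
          have hSa : a ∈ S := (h.mem _ _ hrac).1
          have hSb : b ∈ S := (h.mem _ _ hab.2.2.1).2
          have hSc : c ∈ S := (h.mem _ _ hrac).2
          rcases pair_eq h hSa hSb hSa hSc hEq
              (dist_pos.2 (h.ne _ _ hab.2.2.1)) with ⟨_, hbc⟩ | ⟨hac, _⟩
          · exact hcb hbc.symm
          · exact (h.ne _ _ hrac) hac
        rw [partnerEDist_some hma, edist_dist, edist_dist]
        exact (ENNReal.ofReal_lt_ofReal_iff_of_nonneg dist_nonneg).2 (hdle.lt_of_ne hdne)
    have h1 := hgt x y hmut hxne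
    have h2 := hgt y x (mut_symm h hmut) hyne
    rw [edist_comm] at h2
    exact hs' x y hmut.2.2.1 (lt_min h1 h2)

lemma unique_abs (h : Setup r S) (m' : E → Option E)
    (hm' : ∀ x y, m' x = some y → r x y ∧ m' y = some x)
    (hs' : ∀ x y, r x y → ¬ (edist x y < min (partnerEDist m' x) (partnerEDist m' y))) :
    ∀ x ∈ S, m' x = matchFn r S x := by
  intro x hx
  by_cases hex : ∃ y, ∃ n, Mut r (stage r S n) x y
  · obtain ⟨y, n, hmut⟩ := hex
    rw [matchFn_eq_some h ⟨n, hmut⟩, unique_aux h m' hm' hs' n x y hmut]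
  · have hnone : matchFn r S x = none := by rw [matchFn, dif_neg hex]
    rw [hnone]
    cases hm : m' x with
    | none => rfl
    | some z =>
      exfalso
      obtain ⟨hrxz, hzx⟩ := hm' x z hm
      have hxinf : x ∈ Tinf r S := mem_Tinf_of h hx fun n y hmut => hex ⟨y, n, hmut⟩
      have hzinf : z ∈ Tinf r S := by
        refine mem_Tinf_of h (h.mem _ _ hrxz).2 ?_
        intro k w hw
        have hzw := unique_aux h m' hm' hs' k z w hw
        have hwx : w = x := Option.some.inj (hzw.symm.trans hzx)
        subst hwx
        exact hex ⟨z, k, mut_symm h hw⟩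
      exact no_pair_inf h ⟨x, z, hxinf, hzinf, hrxz⟩

end StableAux

/-- Existence and uniqueness of the stable partial matching, in both the one-color
and the two-color (bipartite) settings, together with the structure of the set of
unmatched points. -/
theorem stable_matching_exists_unique (d : ℕ) :
    (∀ U : Set (EuclideanSpace ℝ (Fin d)),
      DiscreteSet U → NonEquidistant U → NoDescendingChain U →
      ∃ m : EuclideanSpace ℝ (Fin d) → Option (EuclideanSpace ℝ (Fin d)),
        IsPartialMatching U m ∧ IsStableMatching U m ∧
        {x | x ∈ U ∧ m x = none}.Subsingleton ∧
        ∀ m', IsPartialMatching U m' → IsStableMatching U m' →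
          ∀ x ∈ U, m' x = m x) ∧
    (∀ U V : Set (EuclideanSpace ℝ (Fin d)), Disjoint U V →
      DiscreteSet (U ∪ V) → NonEquidistant (U ∪ V) → NoDescendingChain (U ∪ V) →
      ∃ m : EuclideanSpace ℝ (Fin d) → Option (EuclideanSpace ℝ (Fin d)),
        IsBipartiteMatching U V m ∧ IsBipartiteStable U V m ∧
        ({x | x ∈ U ∪ V ∧ m x = none} ⊆ U ∨ {x | x ∈ U ∪ V ∧ m x = none} ⊆ V) ∧
        ∀ m', IsBipartiteMatching U V m' → IsBipartiteStable U V m' →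
          ∀ x ∈ U ∪ V, m' x = m x) := by
  constructor
  · intro U hdisc hneq hndc
    set r : EuclideanSpace ℝ (Fin d) → EuclideanSpace ℝ (Fin d) → Prop :=
      fun x y => x ∈ U ∧ y ∈ U ∧ x ≠ y with hrdef
    have h : StableAux.Setup r U :=
      ⟨fun x y hr => ⟨hr.2.1, hr.1, hr.2.2.symm⟩,
       fun x y hr => ⟨hr.1, hr.2.1⟩,
       fun x y hr => hr.2.2, hdisc, hneq, hndc⟩
    refine ⟨StableAux.matchFn r U, ⟨?_, ?_⟩, ?_, ?_, ?_⟩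
    · intro x hx
      cases hm : StableAux.matchFn r U x with
      | none => rfl
      | some y => exact absurd (StableAux.matchFn_spec h hm).1.1 hx
    · intro x hx y hm
      obtain ⟨⟨_, hyU, hxy⟩, hsymm⟩ := StableAux.matchFn_spec h hm
      exact ⟨hyU, hxy.symm, hsymm⟩
    · intro x hx y hy hxy
      exact StableAux.stable_abs h x y ⟨hx, hy, hxy⟩
    · rintro a ⟨haU, han⟩ b ⟨hbU, hbn⟩
      by_contra hab
      exact StableAux.no_pair_inf h ⟨a, b,
        StableAux.mem_Tinf_of h haU (StableAux.mut_not_of_none h han),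
        StableAux.mem_Tinf_of h hbU (StableAux.mut_not_of_none h hbn),
        haU, hbU, hab⟩
    · intro m' hp hst
      refine StableAux.unique_abs h m' ?_ ?_
      · intro x y hxy
        by_cases hx : x ∈ U
        · obtain ⟨hyU, hyx, hsym⟩ := hp.2 x hx y hxy
          exact ⟨⟨hx, hyU, hyx.symm⟩, hsym⟩
        · rw [hp.1 x hx] at hxy; cases hxy
      · rintro x y ⟨hx, hy, hne⟩
        exact hst x hx y hy hne
  · intro U V hdisj hdisc hneq hndc
    set r : EuclideanSpace ℝ (Fin d) → EuclideanSpace ℝ (Fin d) → Prop :=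
      fun x y => (x ∈ U ∧ y ∈ V) ∨ (x ∈ V ∧ y ∈ U) with hrdef
    have hrne : ∀ x y, r x y → x ≠ y := by
      rintro x y (⟨hx, hy⟩ | ⟨hx, hy⟩) rfl
      · exact Set.disjoint_left.1 hdisj hx hy
      · exact Set.disjoint_left.1 hdisj hy hx
    have h : StableAux.Setup r (U ∪ V) := by
      refine ⟨?_, ?_, hrne, hdisc, hneq, hndc⟩
      · rintro x y (⟨hx, hy⟩ | ⟨hx, hy⟩)
        exacts [Or.inr ⟨hy, hx⟩, Or.inl ⟨hy, hx⟩]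
      · rintro x y (⟨hx, hy⟩ | ⟨hx, hy⟩)
        exacts [⟨Or.inl hx, Or.inr hy⟩, ⟨Or.inr hx, Or.inl hy⟩]
    refine ⟨StableAux.matchFn r (U ∪ V), ⟨?_, ?_, ?_⟩, ?_, ?_, ?_⟩
    · intro x hx
      cases hm : StableAux.matchFn r (U ∪ V) x with
      | none => rfl
      | some y => exact absurd (h.mem _ _ (StableAux.matchFn_spec h hm).1).1 hx
    · intro x hx y hm
      obtain ⟨hr, hsym⟩ := StableAux.matchFn_spec h hm
      rcases hr with ⟨_, hyV⟩ | ⟨hxV, _⟩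
      · exact ⟨hyV, hsym⟩
      · exact absurd hxV (Set.disjoint_left.1 hdisj hx)
    · intro x hx y hm
      obtain ⟨hr, hsym⟩ := StableAux.matchFn_spec h hm
      rcases hr with ⟨hxU, _⟩ | ⟨_, hyU⟩
      · exact absurd hx (Set.disjoint_left.1 hdisj hxU)
      · exact ⟨hyU, hsym⟩
    · intro x hx y hy
      exact StableAux.stable_abs h x y (Or.inl ⟨hx, hy⟩)
    · by_contra hc
      push_neg at hc
      obtain ⟨a, ha, haU⟩ := Set.not_subset.1 hc.1
      obtain ⟨b, hb, hbV⟩ := Set.not_subset.1 hc.2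
      obtain ⟨haS, han⟩ := ha
      obtain ⟨hbS, hbn⟩ := hb
      have haV : a ∈ V := haS.resolve_left haU
      have hbU : b ∈ U := hbS.resolve_right hbV
      exact StableAux.no_pair_inf h ⟨b, a,
        StableAux.mem_Tinf_of h hbS (StableAux.mut_not_of_none h hbn),
        StableAux.mem_Tinf_of h haS (StableAux.mut_not_of_none h han),
        Or.inl ⟨hbU, haV⟩⟩
    · intro m' hbm hbs
      refine StableAux.unique_abs h m' ?_ ?_
      · intro x y hxy
        by_cases hx : x ∈ U
        · obtain ⟨hyV, hs⟩ := hbm.2.1 x hx y hxy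
          exact ⟨Or.inl ⟨hx, hyV⟩, hs⟩
        by_cases hx' : x ∈ V
        · obtain ⟨hyU, hs⟩ := hbm.2.2 x hx' y hxy
          exact ⟨Or.inr ⟨hx', hyU⟩, hs⟩
        · rw [hbm.1 x (fun hmem => hmem.elim hx hx')] at hxy; cases hxy
      · rintro x y (⟨hx, hy⟩ | ⟨hx, hy⟩)
        · exact hbs x hx y hy
        · intro hlt
          rw [edist_comm, min_comm] at hlt
          exact hbs y hy x hx hlt
end

section
/- Let U be a countable set equipped with a locally finite forest structure in which every tree has exactly one end (each vertex has a unique parent on its infinite path, finitely many children, and a total order on children). Then the iterative twig-matching construction—matching ordered children of twigs in consecutive pairs, matching the last odd child to the twig, removing matched vertices, and repeating—produces a perfect matching of U in which every matched pair is at graph distance at most 2 in the original forest. -/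
/-- Parity of a sum of naturals equals parity of the number of odd terms. -/
private lemma aux_sum_mod_two {α : Type*} [DecidableEq α] (s : Finset α) (f : α → ℕ) :
    (∑ x ∈ s, f x) % 2 = (s.filter fun x => f x % 2 = 1).card % 2 := by
  induction s using Finset.induction_on with
  | empty => simp
  | @insert a s ha ih =>
    rw [Finset.sum_insert ha, Finset.filter_insert]
    by_cases h : f a % 2 = 1
    · rw [if_pos h, Finset.card_insert_of_notMem (fun hmem => ha (Finset.mem_filter.1 hmem).1)]
      omega
    · rw [if_neg h]; omega

/-- partner index: `2k ↦ 2k+1`, `2k+1 ↦ 2k`. -/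
private def pidx (i : ℕ) : ℕ := if i % 2 = 0 then i + 1 else i - 1

private lemma pidx_pidx (i : ℕ) : pidx (pidx i) = i := by
  unfold pidx; split <;> split <;> omega

private lemma pidx_ne (i : ℕ) : pidx i ≠ i := by
  unfold pidx; split <;> omega

/-- Matching from a one-ended locally finite forest: a countable set carrying an
acyclic graph with finite degrees, in which every vertex has exactly one
singly-infinite self-avoiding path, admits a perfect matching in which every
matched pair is at graph distance at most 2. -/
theorem forest_matching (U : Type*) [Countable U] [Nonempty U]
    (G : SimpleGraph U)
    (hlf : ∀ v : U, (G.neighborSet v).Finite)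
    (hacyclic : G.IsAcyclic)
    (honeend : ∀ v : U, ∃! p : ℕ → U,
      p 0 = v ∧ (∀ n, G.Adj (p n) (p (n + 1))) ∧ Function.Injective p) :
    ∃ M : U → U, Function.Involutive M ∧ (∀ v, M v ≠ v) ∧
      ∀ v, G.Reachable v (M v) ∧ G.dist v (M v) ≤ 2 := by
  haveI : Encodable U := Encodable.ofCountable U
  letI : LinearOrder U := LinearOrder.lift' Encodable.encode Encodable.encode_injective
  -- Step 1: the parent function
  obtain ⟨par, hadj, hnoper, huniq⟩ : ∃ par : U → U,
      (∀ v, G.Adj v (par v)) ∧ (∀ v (n : ℕ), n ≠ 0 → par^[n] v ≠ v) ∧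
      (∀ v (q : ℕ → U), q 0 = v → (∀ n, G.Adj (q n) (q (n + 1))) →
        Function.Injective q → q 1 = par v) := by
    have hspec : ∀ v, ((honeend v).choose 0 = v ∧
        (∀ n, G.Adj ((honeend v).choose n) ((honeend v).choose (n + 1))) ∧
        Function.Injective (honeend v).choose) := fun v => (honeend v).choose_spec.1
    have huni : ∀ (v : U) (q : ℕ → U),
        (q 0 = v ∧ (∀ n, G.Adj (q n) (q (n + 1))) ∧ Function.Injective q) →
        q = (honeend v).choose := fun v q h => (honeend v).choose_spec.2 q h
    have hshift : ∀ (v : U) (n : ℕ),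
        (honeend v).choose (n + 1) = (honeend ((honeend v).choose 1)).choose n := by
      intro v n
      have h := huni ((honeend v).choose 1) (fun n => (honeend v).choose (n + 1))
        ⟨rfl, fun n => (hspec v).2.1 (n + 1),
          fun a b h => Nat.succ_injective ((hspec v).2.2 h)⟩
      exact congrFun h n
    have hiter : ∀ (n : ℕ) (v : U),
        (honeend v).choose n = (fun v => (honeend v).choose 1)^[n] v := by
      intro n
      induction n with
      | zero => intro v; simpa using (hspec v).1
      | succ n ih =>
        intro v
        rw [Function.iterate_succ_apply, ← ih ((honeend v).choose 1)]
        exact hshift v n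
    refine ⟨fun v => (honeend v).choose 1, ?_, ?_, ?_⟩
    · intro v
      have := (hspec v).2.1 0
      rwa [(hspec v).1] at this
    · intro v n hn h
      exact hn ((hspec v).2.2 (show (honeend v).choose n = (honeend v).choose 0 by
        rw [hiter n v, h, (hspec v).1]))
    · intro v q h0 hq hinj
      rw [huni v q ⟨h0, hq, hinj⟩]
  classical
  -- Step 2: descendant sets are finite
  have hDfin : ∀ v : U, {u : U | ∃ n : ℕ, par^[n] u = v}.Finite := by
    by_contra hbad
    push_neg at hbad
    obtain ⟨v0, hv0⟩ := hbad
    have step : ∀ v : U, ¬ {u : U | ∃ n : ℕ, par^[n] u = v}.Finite →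
        ∃ c, par c = v ∧ ¬ {u : U | ∃ n : ℕ, par^[n] u = c}.Finite := by
      intro v hv
      by_contra hno
      push_neg at hno
      apply hv
      have hsub : {u : U | ∃ n : ℕ, par^[n] u = v} ⊆
          insert v (⋃ c ∈ {w : U | par w = v}, {u : U | ∃ n : ℕ, par^[n] u = c}) := by
        rintro u ⟨n, hn⟩
        match n with
        | 0 => exact Or.inl hn
        | Nat.succ n =>
          refine Or.inr (Set.mem_biUnion (show par^[n] u ∈ {w : U | par w = v} from ?_) ⟨n, rfl⟩)
          rw [Set.mem_setOf_eq, ← Function.iterate_succ_apply' par n u]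
          exact hn
      refine Set.Finite.subset (Set.Finite.insert v (Set.Finite.biUnion ?_ ?_)) hsub
      · refine (hlf v).subset fun w hw => ?_
        rw [SimpleGraph.mem_neighborSet]
        have h := hadj w
        rw [Set.mem_setOf_eq] at hw
        rw [hw] at h
        exact h.symm
      · exact fun c hc => hno c hc
    have stepT : ∀ t : {v : U // ¬ {u : U | ∃ n : ℕ, par^[n] u = v}.Finite},
        ∃ c : {v : U // ¬ {u : U | ∃ n : ℕ, par^[n] u = v}.Finite}, par c.1 = t.1 := by
      rintro ⟨v, hv⟩
      obtain ⟨c, hc1, hc2⟩ := step v hv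
      exact ⟨⟨c, hc2⟩, hc1⟩
    choose nxt hnxt using stepT
    set f : ℕ → {v : U // ¬ {u : U | ∃ n : ℕ, par^[n] u = v}.Finite} :=
      fun n => nxt^[n] ⟨v0, hv0⟩ with hf
    have hq : ∀ n, par (f (n + 1)).1 = (f n).1 := by
      intro n
      have h : f (n + 1) = nxt (f n) := Function.iterate_succ_apply' nxt n _
      rw [h]
      exact hnxt (f n)
    have hiter : ∀ n, par^[n] (f n).1 = v0 := by
      intro n
      induction n with
      | zero => rfl
      | succ n ih =>
        rw [Function.iterate_succ_apply, hq n]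
        exact ih
    have habs : ∀ {a b : ℕ}, a < b → (f a).1 ≠ (f b).1 := by
      intro a b hab heq
      have h2 : par^[b - a + a] (f b).1 = v0 := by
        rw [Nat.sub_add_cancel hab.le]; exact hiter b
      rw [Function.iterate_add_apply, ← heq, hiter a] at h2
      exact hnoper v0 (b - a) (by omega) h2
    have hinj : Function.Injective (fun n => (f n).1) := by
      intro a b hab
      rcases lt_trichotomy a b with h | h | h
      · exact absurd hab (habs h)
      · exact h
      · exact absurd hab.symm (habs h)
    have hadjq : ∀ n, G.Adj ((fun n => (f n).1) n) ((fun n => (f n).1) (n + 1)) := by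
      intro n
      have h := hadj (f (n + 1)).1
      rw [hq n] at h
      exact h.symm
    have h1 : (fun n => (f n).1) 1 = par v0 := huniq v0 _ rfl hadjq hinj
    have h2 : par ((f 1).1) = v0 := hq 0
    rw [show (f 1).1 = par v0 from h1] at h2
    exact hnoper v0 2 (by norm_num) (by simpa [Function.iterate_succ_apply'] using h2)
  -- descendant Finsets, children Finsets, subtree sizes
  set descF : U → Finset U := fun v => (hDfin v).toFinset with hdescFdef
  have hdescF : ∀ v u, u ∈ descF v ↔ ∃ n : ℕ, par^[n] u = v := by
    intro v u; simp [hdescFdef]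
  set childF : U → Finset U := fun v => (hlf v).toFinset.filter (fun w => par w = v)
    with hchildFdef
  have hchild : ∀ v w, w ∈ childF v ↔ par w = v := by
    intro v w
    simp only [hchildFdef, Finset.mem_filter, Set.Finite.mem_toFinset,
      SimpleGraph.mem_neighborSet, and_iff_right_iff_imp]
    intro hw
    have h := hadj w
    rw [hw] at h
    exact h.symm
  set sz : U → ℕ := fun v => (descF v).card with hszdef
  have hrec : ∀ v, sz v = 1 + ∑ c ∈ childF v, sz c := by
    intro v
    have hset : descF v = insert v ((childF v).biUnion descF) := by
      ext u
      simp only [hdescF, Finset.mem_insert, Finset.mem_biUnion, hchild]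
      constructor
      · rintro ⟨n, hn⟩
        match n with
        | 0 => exact Or.inl hn
        | Nat.succ n =>
          refine Or.inr ⟨par^[n] u, ?_, n, rfl⟩
          rw [← Function.iterate_succ_apply' par n u]
          exact hn
      · rintro (rfl | ⟨c, hc, m, hm⟩)
        · exact ⟨0, rfl⟩
        · exact ⟨m + 1, by rw [Function.iterate_succ_apply', hm, hc]⟩
    have hnotmem : v ∉ (childF v).biUnion descF := by
      intro hv
      obtain ⟨c, hc, hm⟩ := Finset.mem_biUnion.1 hv
      rw [hchild] at hc
      obtain ⟨n, hn⟩ := (hdescF c v).1 hm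
      exact hnoper v (n + 1) (by omega) (by rw [Function.iterate_succ_apply', hn, hc])
    have hdisj : ∀ c ∈ childF v, ∀ c' ∈ childF v, c ≠ c' → Disjoint (descF c) (descF c') := by
      intro c hc c' hc' hne
      rw [hchild] at hc hc'
      rw [Finset.disjoint_left]
      intro u hu hu'
      obtain ⟨n, hn⟩ := (hdescF c u).1 hu
      obtain ⟨m, hm⟩ := (hdescF c' u).1 hu'
      have key : ∀ {a b : U} {n m : ℕ}, n ≤ m → par^[n] u = a → par^[m] u = b →
          par a = v → par b = v → a ≠ b → False := by
        intro a b n m hnm hn hm hav hbv hab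
        have hb : par^[m - n] a = b := by
          rw [← hn, ← Function.iterate_add_apply, Nat.sub_add_cancel hnm, hm]
        rcases Nat.eq_zero_or_pos (m - n) with h0 | h0
        · rw [h0] at hb; exact hab hb
        · obtain ⟨k, hk⟩ := Nat.exists_eq_add_of_lt h0
          rw [hk, Nat.zero_add] at hb
          rw [Function.iterate_succ_apply, hav] at hb
          apply hnoper v (k + 1) (by omega)
          rw [Function.iterate_succ_apply', hb, hbv]
      rcases le_total n m with h | h
      · exact key h hn hm hc hc' hne
      · exact key h hm hn hc' hc hne.symm
    show (descF v).card = 1 + ∑ c ∈ childF v, (descF c).card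
    rw [hset, Finset.card_insert_of_notMem hnotmem, Finset.card_biUnion hdisj]
    omega
  -- Step 3: the ordered lists of odd children
  set OL : U → List U := fun v => ((childF v).filter (fun c => sz c % 2 = 1)).sort (· ≤ ·)
    with hOLdef
  have hOmem : ∀ v w, w ∈ OL v ↔ (par w = v ∧ sz w % 2 = 1) := by
    intro v w
    simp only [hOLdef, Finset.mem_sort, Finset.mem_filter, hchild]
  have hOnd : ∀ v, (OL v).Nodup := fun v => Finset.sort_nodup _ _
  have hOlen : ∀ v, (OL v).length % 2 = (sz v + 1) % 2 := by
    intro v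
    have h1 : (OL v).length = ((childF v).filter (fun c => sz c % 2 = 1)).card :=
      Finset.length_sort _
    have h2 := aux_sum_mod_two (childF v) sz
    have h3 := hrec v
    omega
  -- Step 4: the matching
  obtain ⟨M, hM⟩ : ∃ M : U → U, ∀ v, M v =
      if sz v % 2 = 1 then
        (if pidx ((OL (par v)).idxOf v) < (OL (par v)).length then
          (OL (par v)).getD (pidx ((OL (par v)).idxOf v)) v
        else par v)
      else (OL v).getD ((OL v).length - 1) v := ⟨_, fun v => rfl⟩
  have key : ∀ v, M (M v) = v ∧ M v ≠ v ∧
      (G.Adj v (M v) ∨ (G.Adj v (par v) ∧ G.Adj (par v) (M v))) := by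
    intro v
    by_cases hv : sz v % 2 = 1
    · -- v has odd subtree: matched among odd children of its parent
      have hvmem : v ∈ OL (par v) := (hOmem _ _).2 ⟨rfl, hv⟩
      have hi : (OL (par v)).idxOf v < (OL (par v)).length :=
        List.idxOf_lt_length_iff.2 hvmem
      by_cases hlt : pidx ((OL (par v)).idxOf v) < (OL (par v)).length
      · -- matched to a sibling
        set l := OL (par v) with hl
        have hMv : M v = l[pidx (l.idxOf v)]'hlt := by
          rw [hM v, if_pos hv, if_pos hlt, List.getD_eq_getElem _ _ hlt]
        set w := l[pidx (l.idxOf v)]'hlt with hwdef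
        have hwmem : w ∈ l := List.getElem_mem _
        obtain ⟨hwpar, hwodd⟩ := (hOmem _ _).1 hwmem
        have hwv : w ≠ v := by
          intro h
          have h2 : l.idxOf w = pidx (l.idxOf v) := by
            rw [hwdef]; exact List.Nodup.idxOf_getElem (hOnd _) _ _
          rw [h] at h2
          exact pidx_ne (l.idxOf v) h2.symm
        have hMw : M w = v := by
          rw [hM w, if_pos hwodd]
          have hOLw : OL (par w) = l := by rw [hwpar]
          have hiw : (OL (par w)).idxOf w = pidx (l.idxOf v) := by
            rw [hOLw, hwdef]; exact List.Nodup.idxOf_getElem (hOnd _) _ _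
          have hplt : pidx ((OL (par w)).idxOf w) < (OL (par w)).length := by
            rw [hiw, pidx_pidx, hOLw]; exact hi
          rw [if_pos hplt, hiw, hOLw, pidx_pidx, List.getD_eq_getElem _ _ hi]
          exact List.getElem_idxOf hi
        refine ⟨by rw [hMv, hMw], by rw [hMv]; exact hwv, Or.inr ⟨hadj v, ?_⟩⟩
        have h := hadj w
        rw [hwpar] at h
        rw [hMv]
        exact h.symm
      · -- matched to the parent
        have hMv : M v = par v := by rw [hM v, if_pos hv, if_neg hlt]
        set l := OL (par v) with hl
        have hfacts : (l.idxOf v) % 2 = 0 ∧ l.idxOf v = l.length - 1 ∧ l.length % 2 = 1 := by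
          unfold pidx at hlt; split at hlt <;> omega
        have heven : sz (par v) % 2 = 0 := by
          have := hOlen (par v)
          rw [← hl] at this
          omega
        have hMu : M (par v) = v := by
          rw [hM (par v), if_neg (by omega), ← hl]
          have hlen1 : l.length - 1 = l.idxOf v := by omega
          rw [hlen1, List.getD_eq_getElem _ _ hi]
          exact List.getElem_idxOf hi
        exact ⟨by rw [hMv, hMu], by rw [hMv]; exact (hadj v).ne', by rw [hMv]; exact Or.inl (hadj v)⟩
    · -- v has even subtree: matched to its last odd child
      set l := OL v with hl
      have hlen : l.length % 2 = 1 := by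
        have := hOlen v
        rw [← hl] at this
        omega
      have hpos : l.length - 1 < l.length := by omega
      have hMv : M v = l[l.length - 1]'hpos := by
        rw [hM v, if_neg hv, ← hl, List.getD_eq_getElem _ _ hpos]
      set w := l[l.length - 1]'hpos with hwdef
      have hwmem : w ∈ l := List.getElem_mem _
      obtain ⟨hwpar, hwodd⟩ := (hOmem _ _).1 hwmem
      have hwv : w ≠ v := by
        intro h
        rw [h] at hwpar
        exact (hadj v).ne' hwpar
      have hMw : M w = v := by
        rw [hM w, if_pos hwodd]
        have hOLw : OL (par w) = l := by rw [hwpar]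
        have hiw : (OL (par w)).idxOf w = l.length - 1 := by
          rw [hOLw, hwdef]; exact List.Nodup.idxOf_getElem (hOnd _) _ _
        have hnlt : ¬ pidx ((OL (par w)).idxOf w) < (OL (par w)).length := by
          rw [hiw, hOLw]; unfold pidx; split <;> omega
        rw [if_neg hnlt, hwpar]
      refine ⟨by rw [hMv, hMw], by rw [hMv]; exact hwv, Or.inl ?_⟩
      have h := hadj w
      rw [hwpar] at h
      rw [hMv]
      exact h.symm
  refine ⟨M, fun v => (key v).1, fun v => (key v).2.1, fun v => ?_⟩
  rcases (key v).2.2 with h | ⟨h1, h2⟩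
  · refine ⟨h.reachable, ?_⟩
    have hw := SimpleGraph.dist_le (SimpleGraph.Walk.cons h SimpleGraph.Walk.nil)
    have hl1 : (SimpleGraph.Walk.cons h SimpleGraph.Walk.nil).length = 1 := rfl
    omega
  · refine ⟨⟨SimpleGraph.Walk.cons h1 (SimpleGraph.Walk.cons h2 SimpleGraph.Walk.nil)⟩, ?_⟩
    have hw := SimpleGraph.dist_le (SimpleGraph.Walk.cons h1 (SimpleGraph.Walk.cons h2 SimpleGraph.Walk.nil))
    have hl2 : (SimpleGraph.Walk.cons h1 (SimpleGraph.Walk.cons h2 SimpleGraph.Walk.nil)).length = 2 := rfl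
    omega
end

section
/- In any stable two-color (bipartite) partial matching between sets U and V in R^d, suppose all points of U in an interval [a,b] ⊂ R (d = 1) have partners at distance greater than t where b − a ≤ t, and a, b ∈ U are both matched at distance > t. Then every point of V in [a,b] is matched to a point of U in [a,b]. -/
open scoped ENNReal

/-- In a stable bipartite matching on `ℝ`: if `a ≤ b` with `b - a ≤ t`, all points of
`U` in `[a,b]` (in particular `a` and `b` themselves) are matched at distance `> t`,
then every point of `V` in `[a,b]` is matched to a point of `U` in `[a,b]`. -/
theorem stable_bipartite_interval (U V : Set ℝ) (hUV : Disjoint U V)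
    (h1 : DiscreteSet (U ∪ V)) (h2 : NonEquidistant (U ∪ V))
    (m : ℝ → Option ℝ)
    (hm : IsBipartiteMatching U V m) (hms : IsBipartiteStable U V m)
    (t a b : ℝ) (ht : 0 < t) (hab : a ≤ b) (hlen : b - a ≤ t)
    (ha : a ∈ U) (hb : b ∈ U)
    (hbad : ∀ x ∈ U, x ∈ Set.Icc a b → ENNReal.ofReal t < partnerEDist m x) :
    ∀ v ∈ V, v ∈ Set.Icc a b → ∃ u ∈ U, u ∈ Set.Icc a b ∧ m v = some u := by
  intro v hv hvab
  obtain ⟨hav, hvb⟩ := hvab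
  -- partner distance of v is at most edist v a and edist v b
  have key : ∀ c ∈ U, c ∈ Set.Icc a b → edist c v ≤ ENNReal.ofReal t →
      partnerEDist m v ≤ edist c v := by
    intro c hc hcab hct
    have hst := hms c hc v hv
    have hc' : edist c v < partnerEDist m c := lt_of_le_of_lt hct (hbad c hc hcab)
    rcases min_cases (partnerEDist m c) (partnerEDist m v) with ⟨heq, _⟩ | ⟨heq, hle⟩
    · rw [heq] at hst; exact absurd hc' hst
    · rw [heq] at hst; exact not_lt.mp hst
  have hea : edist a v = ENNReal.ofReal (v - a) := by
    rw [edist_dist, Real.dist_eq, abs_of_nonpos (by linarith)]; ring_nf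
  have heb : edist b v = ENNReal.ofReal (b - v) := by
    rw [edist_dist, Real.dist_eq, abs_of_nonneg (by linarith)]
  have h1' : partnerEDist m v ≤ ENNReal.ofReal (v - a) := by
    rw [← hea]
    exact key a ha ⟨le_refl a, hab⟩ (by rw [hea]; exact ENNReal.ofReal_le_ofReal (by linarith))
  have h2' : partnerEDist m v ≤ ENNReal.ofReal (b - v) := by
    rw [← heb]
    exact key b hb ⟨hab, le_refl b⟩ (by rw [heb]; exact ENNReal.ofReal_le_ofReal (by linarith))
  cases hmv : m v with
  | none =>
    exfalso
    have : partnerEDist m v = ⊤ := by unfold partnerEDist; rw [hmv]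
    rw [this] at h1'
    exact (ENNReal.ofReal_lt_top.ne (top_le_iff.mp h1')).elim
  | some u =>
    obtain ⟨hu, _⟩ := hm.2.2 v hv u hmv
    refine ⟨u, hu, ?_, rfl⟩
    have hpv : partnerEDist m v = ENNReal.ofReal (dist v u) := by
      unfold partnerEDist; rw [hmv]; exact edist_dist v u
    rw [hpv] at h1' h2'
    have d1 : dist v u ≤ v - a := (ENNReal.ofReal_le_ofReal_iff (by linarith)).mp h1'
    have d2 : dist v u ≤ b - v := (ENNReal.ofReal_le_ofReal_iff (by linarith)).mp h2'
    rw [Real.dist_eq] at d1 d2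
    constructor
    · have := abs_sub_comm v u
      linarith [le_abs_self (v-u)]
    · have := abs_sub_comm v u
      linarith [le_abs_self (u-v), le_abs_self (v-u)]
end

section
/- Let g : (0,∞) → R be supported on [0,2], continuous and monotone increasing on [0,2] with exactly one sign change at t_0 ∈ (0,2) (g < 0 on (0,t_0), g > 0 on (t_0,2)), and let s ∈ (0,1) satisfy ∫_0^∞ g(t)·t^{−s} dt = 0. Define G_R(r) := ∫_0^R g(r/ρ)·ρ^{s−2} dρ for R, r > 0. Then G_R(r) ≥ 0 for all r > 0, with strict positivity for r ∈ (0, 2R), and G_R(r) = R^{s−1}·G_1(r/R). -/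
open MeasureTheory Set Real

section Aux

variable {g : ℝ → ℝ} {s : ℝ}

lemma aux_integrableOn
    (hsupp : ∀ t, t ∉ Set.Icc (0 : ℝ) 2 → g t = 0)
    (hcont : ContinuousOn g (Set.Icc (0 : ℝ) 2))
    (hmono : MonotoneOn g (Set.Icc (0 : ℝ) 2))
    (hs : s ∈ Set.Ioo (0 : ℝ) 1) :
    IntegrableOn (fun t => g t * t ^ (-s)) (Set.Ioi (0 : ℝ)) := by
  have h02 : (0:ℝ) ∈ Icc (0:ℝ) 2 := ⟨le_rfl, by norm_num⟩
  have h22 : (2:ℝ) ∈ Icc (0:ℝ) 2 := ⟨by norm_num, le_rfl⟩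
  set C : ℝ := max |g 0| |g 2| with hC
  have h1 : IntegrableOn (fun t => g t * t ^ (-s)) (Set.Ioc (0:ℝ) 2) := by
    have hb : IntegrableOn (fun t : ℝ => C * t ^ (-s)) (Set.Ioc (0:ℝ) 2) := by
      have := (intervalIntegral.intervalIntegrable_rpow' (show (-1:ℝ) < -s by linarith [hs.2]) (a := 0) (b := 2))
      rw [intervalIntegrable_iff, uIoc_of_le (by norm_num : (0:ℝ) ≤ 2)] at this
      exact this.const_mul C
    have hmeas : AEStronglyMeasurable (fun t => g t * t ^ (-s))
        (volume.restrict (Set.Ioc (0:ℝ) 2)) := by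
      have hc : ContinuousOn (fun t => g t * t ^ (-s)) (Set.Ioc (0:ℝ) 2) :=
        (hcont.mono Set.Ioc_subset_Icc_self).mul
          (continuousOn_id.rpow_const fun x hx => Or.inl (ne_of_gt hx.1))
      exact hc.aestronglyMeasurable measurableSet_Ioc
    refine Integrable.mono' hb hmeas ?_
    filter_upwards [ae_restrict_mem measurableSet_Ioc] with t ht
    have ht0 : (0:ℝ) < t := ht.1
    have htm : t ∈ Icc (0:ℝ) 2 := ⟨ht0.le, ht.2⟩
    have hgb : |g t| ≤ C :=
      abs_le_max_abs_abs (hmono h02 htm ht0.le) (hmono htm h22 ht.2)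
    have hpow : (0:ℝ) ≤ t ^ (-s) := Real.rpow_nonneg ht0.le _
    calc ‖g t * t ^ (-s)‖ = |g t| * t ^ (-s) := by
          rw [norm_mul, Real.norm_eq_abs, Real.norm_eq_abs, abs_of_nonneg hpow]
      _ ≤ C * t ^ (-s) := by gcongr
  have h2 : IntegrableOn (fun t => g t * t ^ (-s)) (Set.Ioi (2:ℝ)) := by
    have heq : Set.EqOn (fun t => g t * t ^ (-s)) (fun _ => (0:ℝ)) (Set.Ioi (2:ℝ)) := by
      intro t ht
      have : g t = 0 := hsupp t (fun hm => absurd hm.2 (not_le.mpr ht))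
      simp [this]
    exact (integrableOn_congr_fun heq measurableSet_Ioi).mpr (integrableOn_zero)
  have := h1.union h2
  rwa [Set.Ioc_union_Ioi_eq_Ioi (by norm_num : (0:ℝ) ≤ 2)] at this

lemma aux_F_pos {t₀ : ℝ} (ht₀ : t₀ ∈ Set.Ioo (0 : ℝ) 2)
    (hsupp : ∀ t, t ∉ Set.Icc (0 : ℝ) 2 → g t = 0)
    (hcont : ContinuousOn g (Set.Icc (0 : ℝ) 2))
    (hmono : MonotoneOn g (Set.Icc (0 : ℝ) 2))
    (hneg : ∀ t ∈ Set.Ioo (0 : ℝ) t₀, g t < 0)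
    (hpos : ∀ t ∈ Set.Ioo t₀ (2 : ℝ), 0 < g t)
    (hs : s ∈ Set.Ioo (0 : ℝ) 1)
    (hzero : (∫ t in Set.Ioi (0 : ℝ), g t * t ^ (-s)) = 0)
    {a : ℝ} (ha : a ∈ Set.Ioo (0 : ℝ) 2) :
    0 < ∫ t in Set.Ioi a, g t * t ^ (-s) := by
  have hint := aux_integrableOn hsupp hcont hmono hs
  set f : ℝ → ℝ := fun t => g t * t ^ (-s) with hf
  have hg2 : 0 < g 2 := by
    set t' : ℝ := (t₀ + 2) / 2 with ht'
    have h1 : t₀ < t' := by rw [ht']; linarith [ht₀.2]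
    have h2 : t' < 2 := by rw [ht']; linarith [ht₀.2]
    have := hpos t' ⟨h1, h2⟩
    have hle := hmono ⟨by linarith [ht₀.1], h2.le⟩ ⟨by norm_num, le_rfl⟩ h2.le
    linarith
  rcases lt_or_ge a t₀ with hat | hat
  · -- a < t₀ : tail integral equals minus the head integral, which is negative
    have hdisj : Disjoint (Set.Ioc (0:ℝ) a) (Set.Ioi a) :=
      Set.disjoint_left.mpr fun x hx hx' => absurd hx' (not_lt.mpr hx.2)
    have hu : Set.Ioc (0:ℝ) a ∪ Set.Ioi a = Set.Ioi (0:ℝ) :=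
      Set.Ioc_union_Ioi_eq_Ioi ha.1.le
    have hi1 : IntegrableOn f (Set.Ioc (0:ℝ) a) :=
      hint.mono_set (fun x hx => hx.1)
    have hi2 : IntegrableOn f (Set.Ioi a) :=
      hint.mono_set (Set.Ioi_subset_Ioi ha.1.le)
    have hsplit := setIntegral_union hdisj measurableSet_Ioi hi1 hi2
    rw [hu, hzero] at hsplit
    have hneg' : 0 < ∫ t in Set.Ioc (0:ℝ) a, -f t := by
      rw [setIntegral_pos_iff_support_of_nonneg_ae]
      · refine lt_of_lt_of_le ?_ (measure_mono (?_ : Set.Ioc (0:ℝ) a ⊆ _))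
        · rw [Real.volume_Ioc]
          exact ENNReal.ofReal_pos.mpr (by linarith [ha.1])
        · intro t ht
          have ht0 : (0:ℝ) < t := ht.1
          have hgt : g t < 0 := hneg t ⟨ht0, lt_of_le_of_lt ht.2 hat⟩
          have hpow : (0:ℝ) < t ^ (-s) := Real.rpow_pos_of_pos ht0 _
          have : -f t > 0 := by
            simp only [hf, neg_mul_eq_neg_mul]
            exact mul_pos (by linarith) hpow
          exact ⟨ne_of_gt this, ht⟩
      · filter_upwards [ae_restrict_mem measurableSet_Ioc] with t ht
        have ht0 : (0:ℝ) < t := ht.1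
        have hgt : g t < 0 := hneg t ⟨ht0, lt_of_le_of_lt ht.2 hat⟩
        have hpow : (0:ℝ) < t ^ (-s) := Real.rpow_pos_of_pos ht0 _
        have : f t < 0 := mul_neg_of_neg_of_pos hgt hpow
        simp only [Pi.zero_apply]
        linarith
      · exact hi1.neg
    rw [integral_neg] at hneg'
    linarith
  · -- t₀ ≤ a : tail integral is integral over (a,2], where f > 0
    have hdisj : Disjoint (Set.Ioc a 2) (Set.Ioi (2:ℝ)) :=
      Set.disjoint_left.mpr fun x hx hx' => absurd hx' (not_lt.mpr hx.2)
    have hu : Set.Ioc a 2 ∪ Set.Ioi (2:ℝ) = Set.Ioi a :=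
      Set.Ioc_union_Ioi_eq_Ioi ha.2.le
    have hi1 : IntegrableOn f (Set.Ioc a 2) :=
      hint.mono_set (fun x hx => lt_trans ha.1 hx.1)
    have hi2 : IntegrableOn f (Set.Ioi (2:ℝ)) :=
      hint.mono_set (Set.Ioi_subset_Ioi (by norm_num))
    have hsplit := setIntegral_union hdisj measurableSet_Ioi hi1 hi2
    rw [hu] at hsplit
    have h20 : (∫ t in Set.Ioi (2:ℝ), f t) = 0 := by
      have heq : Set.EqOn f (fun _ => (0:ℝ)) (Set.Ioi (2:ℝ)) := by
        intro t ht
        have : g t = 0 := hsupp t (fun hm => absurd hm.2 (not_le.mpr ht))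
        simp [hf, this]
      rw [setIntegral_congr_fun measurableSet_Ioi heq]
      simp
    have hfpos : ∀ t ∈ Set.Ioc a 2, 0 < f t := by
      intro t ht
      have ht0 : (0:ℝ) < t := lt_trans ha.1 ht.1
      have hgt : 0 < g t := by
        rcases lt_or_eq_of_le ht.2 with h | h
        · exact hpos t ⟨lt_of_le_of_lt hat ht.1, h⟩
        · rw [h]; exact hg2
      exact mul_pos hgt (Real.rpow_pos_of_pos ht0 _)
    have hpos' : 0 < ∫ t in Set.Ioc a 2, f t := by
      rw [setIntegral_pos_iff_support_of_nonneg_ae]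
      · refine lt_of_lt_of_le ?_ (measure_mono (?_ : Set.Ioc a 2 ⊆ _))
        · rw [Real.volume_Ioc]
          exact ENNReal.ofReal_pos.mpr (by linarith [ha.2])
        · exact fun t ht => ⟨ne_of_gt (hfpos t ht), ht⟩
      · filter_upwards [ae_restrict_mem measurableSet_Ioc] with t ht
        simpa using (hfpos t ht).le
      · exact hi1
    linarith

lemma aux_cov (g : ℝ → ℝ) (s : ℝ) {r c : ℝ} (hr : 0 < r) (hc : 0 < c) :
    (∫ t in Set.Ioi (r / c), g t * t ^ (-s))
      = r ^ (1 - s) * ∫ ρ in Set.Ioo (0 : ℝ) c, g (r / ρ) * ρ ^ (s - 2) := by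
  set φ : ℝ → ℝ := fun ρ => r / ρ with hφ
  have himg : φ '' Set.Ioo (0:ℝ) c = Set.Ioi (r / c) := by
    ext x
    constructor
    · rintro ⟨ρ, ⟨h1, h2⟩, rfl⟩
      exact div_lt_div_of_pos_left hr h1 h2
    · intro hx
      have hx0 : 0 < x := lt_trans (div_pos hr hc) hx
      refine ⟨r / x, ⟨div_pos hr hx0, ?_⟩, ?_⟩
      · have h := (div_lt_iff₀ hc).mp hx
        rw [div_lt_iff₀ hx0, mul_comm]
        exact h
      · simp only [hφ]
        field_simp
  have hderiv : ∀ ρ ∈ Set.Ioo (0:ℝ) c,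
      HasDerivWithinAt φ (-(r / ρ ^ 2)) (Set.Ioo (0:ℝ) c) ρ := by
    intro ρ hρ
    have h := (hasDerivAt_inv (ne_of_gt hρ.1)).const_mul r
    have hfun : φ = fun y => r * y⁻¹ := by
      funext y; rw [hφ]; ring
    have hval : -(r / ρ ^ 2) = r * -(ρ ^ 2)⁻¹ := by ring
    rw [hfun, hval]
    exact h.hasDerivWithinAt
  have hinj : Set.InjOn φ (Set.Ioo (0:ℝ) c) := by
    intro x hx y hy h
    simp only [hφ] at h
    rw [div_eq_div_iff (ne_of_gt hx.1) (ne_of_gt hy.1)] at h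
    exact mul_left_cancel₀ (ne_of_gt hr) (by linarith)
  have key := integral_image_eq_integral_abs_deriv_smul measurableSet_Ioo hderiv hinj
    (fun t => g t * t ^ (-s))
  rw [himg] at key
  rw [key, ← integral_const_mul]
  refine setIntegral_congr_fun measurableSet_Ioo fun ρ hρ => ?_
  have hρ0 : (0:ℝ) < ρ := hρ.1
  have h1 : (r / ρ) ^ (-s) = ρ ^ s / r ^ s := by
    rw [Real.rpow_neg (div_nonneg hr.le hρ0.le), Real.div_rpow hr.le hρ0.le, inv_div]
  have h2 : ρ ^ (s - 2) = ρ ^ s / ρ ^ (2:ℕ) := by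
    rw [Real.rpow_sub hρ0, ← Real.rpow_natCast ρ 2]
    norm_num
  have h3 : r ^ (1 - s) = r / r ^ s := by
    rw [Real.rpow_sub hr, Real.rpow_one]
  simp only [hφ]
  rw [abs_neg, abs_of_pos (div_pos hr (pow_pos hρ0 2)), smul_eq_mul, h1, h2, h3]
  ring

end Aux

/-- Positivity and scaling of `G_R(r) = ∫_0^R g(r/ρ) ρ^{s-2} dρ` for a function `g`
supported on `[0,2]`, continuous and increasing there with a single sign change at
`t₀`, when `s ∈ (0,1)` satisfies `∫_0^∞ g(t) t^{-s} dt = 0`. -/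
theorem G_nonneg_and_scaling (g : ℝ → ℝ) (t₀ : ℝ) (ht₀ : t₀ ∈ Set.Ioo (0 : ℝ) 2)
    (hsupp : ∀ t, t ∉ Set.Icc (0 : ℝ) 2 → g t = 0)
    (hcont : ContinuousOn g (Set.Icc (0 : ℝ) 2))
    (hmono : MonotoneOn g (Set.Icc (0 : ℝ) 2))
    (hneg : ∀ t ∈ Set.Ioo (0 : ℝ) t₀, g t < 0)
    (hpos : ∀ t ∈ Set.Ioo t₀ (2 : ℝ), 0 < g t)
    (s : ℝ) (hs : s ∈ Set.Ioo (0 : ℝ) 1)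
    (hzero : (∫ t in Set.Ioi (0 : ℝ), g t * t ^ (-s)) = 0)
    (G : ℝ → ℝ → ℝ)
    (hG : G = fun R r => ∫ ρ in Set.Ioo (0 : ℝ) R, g (r / ρ) * ρ ^ (s - 2)) :
    ∀ R > (0 : ℝ), ∀ r > (0 : ℝ),
      0 ≤ G R r ∧ (r < 2 * R → 0 < G R r) ∧ G R r = R ^ (s - 1) * G 1 (r / R) := by
  intro R hR r hr
  have hrR : 0 < r / R := div_pos hr hR
  -- the tail integral
  set A : ℝ := ∫ t in Set.Ioi (r / R), g t * t ^ (-s) with hA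
  have eq1 : A = r ^ (1 - s) * G R r := by
    rw [hA, hG, aux_cov g s hr hR]
  have eq2 : A = (r / R) ^ (1 - s) * G 1 (r / R) := by
    have := aux_cov g s hrR (show (0:ℝ) < 1 by norm_num)
    rw [div_one] at this
    rw [hA, this, hG]
  have hr1s : (0:ℝ) < r ^ (1 - s) := Real.rpow_pos_of_pos hr _
  have hR1s : (0:ℝ) < R ^ (1 - s) := Real.rpow_pos_of_pos hR _
  have hGA : G R r = A / r ^ (1 - s) := by
    rw [eq1]; field_simp
  have hAnn : 0 ≤ A := by
    rcases lt_or_ge (r / R) 2 with h2 | h2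
    · exact (aux_F_pos ht₀ hsupp hcont hmono hneg hpos hs hzero ⟨hrR, h2⟩).le
    · have heq : Set.EqOn (fun t => g t * t ^ (-s)) (fun _ => (0:ℝ)) (Set.Ioi (r / R)) := by
        intro t ht
        have h2t : (2:ℝ) < t := lt_of_le_of_lt h2 ht
        have : g t = 0 := hsupp t (fun hm => absurd hm.2 (not_le.mpr h2t))
        simp [this]
      rw [hA, setIntegral_congr_fun measurableSet_Ioi heq]
      simp
  refine ⟨?_, ?_, ?_⟩
  · rw [hGA]; exact div_nonneg hAnn hr1s.le
  · intro hlt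
    have h2 : r / R < 2 := (div_lt_iff₀ hR).mpr (by linarith)
    have hApos := aux_F_pos ht₀ hsupp hcont hmono hneg hpos hs hzero ⟨hrR, h2⟩
    rw [hGA]
    exact div_pos hApos hr1s
  · have hdivpow : (r / R) ^ (1 - s) = r ^ (1 - s) / R ^ (1 - s) :=
      Real.div_rpow hr.le hR.le _
    have hRs1 : R ^ (s - 1) = (R ^ (1 - s))⁻¹ := by
      rw [← Real.rpow_neg hR.le]
      ring_nf
    rw [hGA, hRs1, eq2, hdivpow]
    field_simp
end

section
/- The map f : B(0,R) → R^d defined by f(x) = L·x + q(x, u_0)·u_0 is measure preserving (has Jacobian of absolute value 1 almost everywhere), where L is projection onto the hyperplane orthogonal to the unit vector u_0 and q(x, u_0) is the distance from x to the boundary of the ball B(0,R) in direction u_0. -/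
open MeasureTheory Matrix

lemma det_id_add_smulRight {d : ℕ} (p : EuclideanSpace ℝ (Fin d) →L[ℝ] ℝ)
    (u : EuclideanSpace ℝ (Fin d)) :
    (ContinuousLinearMap.id ℝ (EuclideanSpace ℝ (Fin d)) + p.smulRight u).det = 1 + p u := by
  classical
  set b := (EuclideanSpace.basisFun (Fin d) ℝ).toBasis with hb
  rw [ContinuousLinearMap.det, ← LinearMap.det_toMatrix b]
  have hm : (LinearMap.toMatrix b b
        ((ContinuousLinearMap.id ℝ (EuclideanSpace ℝ (Fin d)) + p.smulRight u :
          EuclideanSpace ℝ (Fin d) →L[ℝ] EuclideanSpace ℝ (Fin d)) :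
          EuclideanSpace ℝ (Fin d) →ₗ[ℝ] EuclideanSpace ℝ (Fin d)))
      = 1 + Matrix.replicateCol Unit (fun i => b.repr u i) * Matrix.replicateRow Unit (fun j => p (b j)) := by
    ext i j
    simp [LinearMap.toMatrix_apply, Matrix.mul_apply, Matrix.one_apply, Matrix.replicateCol, Matrix.replicateRow,
      Finsupp.single_apply, eq_comm, mul_comm, Matrix.of_apply]
  rw [hm, Matrix.det_one_add_replicateCol_mul_replicateRow]
  congr 1
  have h2 : p u = ∑ i, b.repr u i * p (b i) := by
    conv_lhs => rw [← b.sum_repr u]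
    simp [_root_.map_sum, _root_.map_smul, smul_eq_mul, -Module.Basis.sum_repr]
  rw [h2]
  simp [dotProduct, mul_comm]

set_option maxHeartbeats 1000000 in
/-- The map `f(x) = L x + q(x,u₀) u₀`, sending a point of the ball to the pair
(projection orthogonal to `u₀`, exit distance in direction `u₀`), preserves
Lebesgue measure: the image of the restriction of `volume` to the ball is the
restriction of `volume` to the image of the ball. -/
theorem exit_map_measure_preserving (d : ℕ) (hd : 1 ≤ d) (R : ℝ) (hR : 0 < R)
    (u₀ : EuclideanSpace ℝ (Fin d)) (hu₀ : ‖u₀‖ = 1)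
    (q : EuclideanSpace ℝ (Fin d) → ℝ)
    (hq : q = fun x => sInf {t : ℝ | 0 ≤ t ∧ x + t • u₀ ∉ Metric.ball (0 : EuclideanSpace ℝ (Fin d)) R})
    (f : EuclideanSpace ℝ (Fin d) → EuclideanSpace ℝ (Fin d))
    (hf : f = fun x => (x - (inner ℝ x u₀ : ℝ) • u₀) + q x • u₀) :
    Measure.map f (volume.restrict (Metric.ball (0 : EuclideanSpace ℝ (Fin d)) R))
      = volume.restrict (f '' Metric.ball (0 : EuclideanSpace ℝ (Fin d)) R) := by
  classical
  set B : Set (EuclideanSpace ℝ (Fin d)) := Metric.ball 0 R with hB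
  have huu : (inner ℝ u₀ u₀ : ℝ) = 1 := by
    rw [real_inner_self_eq_norm_sq, hu₀]; norm_num
  set w : EuclideanSpace ℝ (Fin d) → ℝ :=
    fun x => R ^ 2 - ‖x‖ ^ 2 + (inner ℝ x u₀ : ℝ) ^ 2 with hw
  have hnorm_sq : ∀ (x : EuclideanSpace ℝ (Fin d)) (t : ℝ), ‖x + t • u₀‖ ^ 2
      = ‖x‖ ^ 2 + 2 * t * (inner ℝ x u₀ : ℝ) + t ^ 2 := by
    intro x t
    rw [@norm_add_sq_real, real_inner_smul_right, norm_smul, hu₀, Real.norm_eq_abs, mul_one,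
      sq_abs]
    ring
  have hs2 : ∀ x : EuclideanSpace ℝ (Fin d), (inner ℝ x u₀ : ℝ) ^ 2 ≤ ‖x‖ ^ 2 := by
    intro x
    have h := abs_real_inner_le_norm x u₀
    rw [hu₀, mul_one] at h
    calc (inner ℝ x u₀ : ℝ) ^ 2 = |(inner ℝ x u₀ : ℝ)| ^ 2 := (sq_abs _).symm
      _ ≤ ‖x‖ ^ 2 := by gcongr
  -- key formula for q on the ball
  have hq_eq : ∀ x ∈ B, q x = Real.sqrt (w x) - (inner ℝ x u₀ : ℝ) := by
    intro x hx
    have hxR : ‖x‖ < R := by simpa [hB, mem_ball_zero_iff] using hx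
    set s : ℝ := (inner ℝ x u₀ : ℝ) with hs
    have hwx : w x = R ^ 2 - ‖x‖ ^ 2 + s ^ 2 := rfl
    have hx2 : ‖x‖ ^ 2 < R ^ 2 := by
      exact pow_lt_pow_left₀ hxR (norm_nonneg x) (by norm_num)
    have hwpos : s ^ 2 < w x := by rw [hwx]; linarith
    have hw0 : 0 ≤ w x := by nlinarith [sq_nonneg s]
    have hsq : Real.sqrt (w x) ^ 2 = w x := Real.sq_sqrt hw0
    have hg0 : 0 ≤ Real.sqrt (w x) := Real.sqrt_nonneg _
    have hslt : |s| < Real.sqrt (w x) := by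
      rw [show |s| = Real.sqrt (s ^ 2) by rw [Real.sqrt_sq_eq_abs]]
      exact Real.sqrt_lt_sqrt (sq_nonneg s) hwpos
    have habs := abs_lt.mp hslt
    have hset : {t : ℝ | 0 ≤ t ∧ x + t • u₀ ∉ B} = Set.Ici (Real.sqrt (w x) - s) := by
      ext t
      simp only [Set.mem_setOf_eq, Set.mem_Ici, hB, mem_ball_zero_iff, not_lt]
      constructor
      · rintro ⟨ht, hout⟩
        have h1 : R ^ 2 ≤ ‖x + t • u₀‖ ^ 2 := pow_le_pow_left₀ hR.le hout 2
        rw [hnorm_sq] at h1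
        have h2 : w x ≤ (s + t) ^ 2 := by rw [hwx]; nlinarith
        by_contra hlt
        push_neg at hlt
        have h3 : (s + t) ^ 2 < Real.sqrt (w x) ^ 2 := by
          apply sq_lt_sq'
          · linarith [habs.1]
          · linarith
        rw [hsq] at h3; linarith
      · intro ht
        have ht0 : 0 ≤ t := by linarith [habs.2]
        refine ⟨ht0, ?_⟩
        have hst : Real.sqrt (w x) ≤ s + t := by linarith
        have h1 : w x ≤ (s + t) ^ 2 := by
          have := pow_le_pow_left₀ hg0 hst 2
          rw [hsq] at this; exact this
        have h2 : R ^ 2 ≤ ‖x + t • u₀‖ ^ 2 := by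
          rw [hnorm_sq]
          rw [hwx] at h1
          nlinarith
        by_contra hcon
        push_neg at hcon
        have := pow_lt_pow_left₀ hcon (norm_nonneg _) (two_ne_zero)
        linarith
    rw [hq]
    simp only [hB] at hset ⊢
    rw [hset, csInf_Ici]
  -- the smooth extension F
  set F : EuclideanSpace ℝ (Fin d) → EuclideanSpace ℝ (Fin d) :=
    fun x => x + (Real.sqrt (w x) - 2 * (inner ℝ x u₀ : ℝ)) • u₀ with hF
  have hEqOn : Set.EqOn f F B := by
    intro x hx
    rw [hf]
    simp only
    rw [hq_eq x hx, hF]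
    simp only
    module
  -- q vanishes outside the ball
  have hq0 : ∀ x ∉ B, q x = 0 := by
    intro x hx
    have h0 : (0:ℝ) ∈ {t : ℝ | 0 ≤ t ∧ x + t • u₀ ∉ B} := by
      refine ⟨le_refl 0, ?_⟩
      simpa using hx
    rw [hq]
    exact le_antisymm (csInf_le ⟨0, fun t ht => ht.1⟩ h0) (le_csInf ⟨0, h0⟩ fun t ht => ht.1)
  -- measurability of f
  have hcont : Continuous fun x : EuclideanSpace ℝ (Fin d) =>
      Real.sqrt (w x) - (inner ℝ x u₀ : ℝ) := by
    have hc1 : Continuous fun x : EuclideanSpace ℝ (Fin d) => (inner ℝ x u₀ : ℝ) :=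
      continuous_id.inner continuous_const
    have hc2 : Continuous w := by
      rw [hw]
      exact (continuous_const.sub (continuous_norm.pow 2)).add (hc1.pow 2)
    exact (Real.continuous_sqrt.comp hc2).sub hc1
  have hqmeas : Measurable q := by
    have hpw : q = B.piecewise (fun x => Real.sqrt (w x) - (inner ℝ x u₀ : ℝ)) (fun _ => 0) := by
      funext x
      by_cases hx : x ∈ B
      · rw [Set.piecewise_eq_of_mem _ _ _ hx, hq_eq x hx]
      · rw [Set.piecewise_eq_of_notMem _ _ _ hx, hq0 x hx]
    rw [hpw]
    exact Measurable.piecewise measurableSet_ball hcont.measurable measurable_const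
  have hfmeas : Measurable f := by
    rw [hf]
    apply Measurable.add
    · apply Measurable.sub measurable_id
      exact ((continuous_id.inner continuous_const).measurable).smul_const u₀
    · exact hqmeas.smul_const u₀
  -- the derivative
  set p : EuclideanSpace ℝ (Fin d) → (EuclideanSpace ℝ (Fin d) →L[ℝ] ℝ) := fun x =>
    (1 / (2 * Real.sqrt (w x))) • ((2 * (inner ℝ x u₀ : ℝ)) • innerSL ℝ u₀ - (2:ℝ) • innerSL ℝ x)
      - (2:ℝ) • innerSL ℝ u₀ with hp
  set f' : EuclideanSpace ℝ (Fin d) → (EuclideanSpace ℝ (Fin d) →L[ℝ] EuclideanSpace ℝ (Fin d)) :=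
    fun x => ContinuousLinearMap.id ℝ (EuclideanSpace ℝ (Fin d)) + (p x).smulRight u₀ with hf'
  have hpu : ∀ x, p x u₀ = -2 := by
    intro x
    simp only [hp, ContinuousLinearMap.coe_sub', Pi.sub_apply, ContinuousLinearMap.coe_smul',
      Pi.smul_apply, innerSL_apply_apply, smul_eq_mul, huu]
    have hxu : (inner ℝ x u₀ : ℝ) = (inner ℝ x u₀ : ℝ) := rfl
    ring
  have hinnerD : ∀ x : EuclideanSpace ℝ (Fin d),
      HasFDerivAt (fun y : EuclideanSpace ℝ (Fin d) => (inner ℝ y u₀ : ℝ)) (innerSL ℝ u₀) x := by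
    intro x
    have hfun : (fun y : EuclideanSpace ℝ (Fin d) => (inner ℝ y u₀ : ℝ))
        = fun y => innerSL ℝ u₀ y := by
      funext y
      rw [innerSL_apply_apply]
      exact (real_inner_comm y u₀).symm
    rw [hfun]
    exact (innerSL ℝ u₀).hasFDerivAt
  have hderiv : ∀ x ∈ B, HasFDerivWithinAt f (f' x) B x := by
    intro x hx
    have hxR : ‖x‖ < R := by simpa [hB, mem_ball_zero_iff] using hx
    have hx2 : ‖x‖ ^ 2 < R ^ 2 := pow_lt_pow_left₀ hxR (norm_nonneg x) (by norm_num)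
    have hwx : w x = R ^ 2 - ‖x‖ ^ 2 + (inner ℝ x u₀ : ℝ) ^ 2 := rfl
    have hwpos : 0 < w x := by rw [hwx]; nlinarith [hs2 x]
    have hnormD : HasFDerivAt (fun y : EuclideanSpace ℝ (Fin d) => ‖y‖ ^ 2)
        ((2:ℕ) • innerSL ℝ x) x := by
      have h := (hasFDerivAt_id (𝕜 := ℝ) x).norm_sq
      simpa using h
    have hwD : HasFDerivAt w
        ((2 * (inner ℝ x u₀ : ℝ)) • innerSL ℝ u₀ - (2:ℝ) • innerSL ℝ x) x := by
      have hmulD := (hinnerD x).mul (hinnerD x)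
      have h1 := ((hasFDerivAt_const (R ^ 2) x).sub hnormD).add hmulD
      have hwfun : w = fun y : EuclideanSpace ℝ (Fin d) =>
          (R ^ 2 - ‖y‖ ^ 2) + (inner ℝ y u₀ : ℝ) * (inner ℝ y u₀ : ℝ) := by
        funext y; simp only [hw]; ring
      rw [hwfun]
      refine h1.congr_fderiv ?_
      ext z
      simp only [ContinuousLinearMap.coe_sub', Pi.sub_apply, ContinuousLinearMap.coe_smul',
        Pi.smul_apply, ContinuousLinearMap.add_apply, ContinuousLinearMap.coe_add',
        Pi.add_apply, innerSL_apply_apply, smul_eq_mul, nsmul_eq_mul, Nat.cast_ofNat,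
        ContinuousLinearMap.zero_apply, Pi.mul_apply, Pi.ofNat_apply]
      ring
    have hsqrtD : HasFDerivAt (fun y => Real.sqrt (w y))
        ((1 / (2 * Real.sqrt (w x))) •
          ((2 * (inner ℝ x u₀ : ℝ)) • innerSL ℝ u₀ - (2:ℝ) • innerSL ℝ x)) x :=
      (Real.hasDerivAt_sqrt hwpos.ne').comp_hasFDerivAt x hwD
    have hσD : HasFDerivAt
        (fun y : EuclideanSpace ℝ (Fin d) => Real.sqrt (w y) - 2 * (inner ℝ y u₀ : ℝ)) (p x) x := by
      have h2 := hsqrtD.sub ((hinnerD x).const_mul 2)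
      exact h2
    have hFD : HasFDerivAt F (f' x) x := by
      have h3 := (hasFDerivAt_id (𝕜 := ℝ) x).add (hσD.smul_const u₀)
      exact h3
    exact hFD.hasFDerivWithinAt.congr (fun y hy => hEqOn hy) (hEqOn hx)
  -- injectivity on the ball
  have hinnerF : ∀ z, (inner ℝ (F z) u₀ : ℝ) = Real.sqrt (w z) - (inner ℝ z u₀ : ℝ) := by
    intro z
    simp only [hF]
    rw [inner_add_left, real_inner_smul_left, huu]
    ring
  have hwL : ∀ z : EuclideanSpace ℝ (Fin d),
      w z = R ^ 2 - ‖z - (inner ℝ z u₀ : ℝ) • u₀‖ ^ 2 := by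
    intro z
    have h : ‖z - (inner ℝ z u₀ : ℝ) • u₀‖ ^ 2 = ‖z‖ ^ 2 - (inner ℝ z u₀ : ℝ) ^ 2 := by
      rw [@norm_sub_sq_real, real_inner_smul_right, norm_smul, hu₀, Real.norm_eq_abs, mul_one,
        sq_abs]
      ring
    rw [h, hw]
    ring
  have hLF : ∀ z, F z - (inner ℝ (F z) u₀ : ℝ) • u₀ = z - (inner ℝ z u₀ : ℝ) • u₀ := by
    intro z
    rw [hinnerF z]
    simp only [hF]
    module
  have hinj : Set.InjOn f B := by
    intro x hx y hy hxy
    rw [hEqOn hx, hEqOn hy] at hxy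
    have hL : x - (inner ℝ x u₀ : ℝ) • u₀ = y - (inner ℝ y u₀ : ℝ) • u₀ := by
      rw [← hLF x, ← hLF y, hxy]
    have hwxy : w x = w y := by rw [hwL x, hwL y, hL]
    have hI : Real.sqrt (w x) - (inner ℝ x u₀ : ℝ) = Real.sqrt (w y) - (inner ℝ y u₀ : ℝ) := by
      rw [← hinnerF x, ← hinnerF y, hxy]
    have hss : (inner ℝ x u₀ : ℝ) = (inner ℝ y u₀ : ℝ) := by
      rw [hwxy] at hI
      linarith
    rw [hss] at hL
    have h3 : x - (inner ℝ y u₀ : ℝ) • u₀ + (inner ℝ y u₀ : ℝ) • u₀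
        = y - (inner ℝ y u₀ : ℝ) • u₀ + (inner ℝ y u₀ : ℝ) • u₀ := by rw [hL]
    simpa using h3
  -- change of variables
  have key := map_withDensity_abs_det_fderiv_eq_addHaar
    (volume : Measure (EuclideanSpace ℝ (Fin d)))
    (measurableSet_ball (x := (0 : EuclideanSpace ℝ (Fin d))) (ε := R)).nullMeasurableSet hderiv hinj
  have hdens : (fun x => ENNReal.ofReal |(f' x).det|)
      = (1 : EuclideanSpace ℝ (Fin d) → ENNReal) := by
    funext x
    rw [Pi.one_apply]
    rw [hf']
    simp only
    rw [det_id_add_smulRight, hpu]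
    norm_num
  rw [hdens, withDensity_one] at key
  exact key
end
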